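/- arXiv:1408.3961 — 6 statements merged into one kernel-verified Lean document; each statement's English description precedes it below -/
import Mathlib

section
/- Let q be a real-valued random variable on a probability space (Ω, P) whose law is symmetric about zero (q and −q are identically distributed), with E[log(1 + q²)] < ∞ and P(q ≠ 0) > 0. Then for every E ∈ ℝ there exists ζ ∈ ℂ with Im ζ > 0 and |ζ| > 1 such that Re(ζ + 1/ζ) + E = 0 and E[ log( q² / (Im ζ)² + 1/|ζ|⁴ ) ] = 0. -/
open MeasureTheory Complex

section Aux

variable {Ω : Type*} [MeasurableSpace Ω] (P : Measure Ω) [IsProbabilityMeasure P]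
  (q : Ω → ℝ)

lemma aux_log_int (hqmeas : Measurable q)
    (hint : Integrable (fun ω => Real.log (1 + (q ω) ^ 2)) P)
    {c : ℝ} (hc : 0 ≤ c) :
    Integrable (fun ω => Real.log (1 + c * (q ω) ^ 2)) P := by
  apply Integrable.mono' ((integrable_const (Real.log (max 1 c))).add hint)
  · exact ((measurable_const.add (measurable_const.mul (hqmeas.pow_const 2))).log).aestronglyMeasurable
  · filter_upwards with ω
    have hq : (0:ℝ) ≤ (q ω)^2 := sq_nonneg _
    have h1 : (1:ℝ) ≤ 1 + c * (q ω)^2 := by nlinarith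
    have h2 : 1 + c * (q ω)^2 ≤ max 1 c * (1 + (q ω)^2) := by
      rcases le_total c 1 with h | h
      · rw [max_eq_left h]; nlinarith
      · rw [max_eq_right h]; nlinarith
    simp only [Pi.add_apply]
    rw [Real.norm_eq_abs, _root_.abs_of_nonneg (Real.log_nonneg h1)]
    calc Real.log (1 + c * (q ω)^2) ≤ Real.log (max 1 c * (1 + (q ω)^2)) := by
          apply Real.log_le_log (by linarith) h2
      _ = Real.log (max 1 c) + Real.log (1 + (q ω)^2) := by
          rw [Real.log_mul (by positivity) (by nlinarith)]

lemma aux_phi_lb (hqmeas : Measurable q)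
    (hint : Integrable (fun ω => Real.log (1 + (q ω) ^ 2)) P)
    {δ c : ℝ} (hδ : 0 < δ) (hc : 0 ≤ c) :
    Real.log (1 + c * δ) * (P {ω | δ ≤ (q ω) ^ 2}).toReal
      ≤ ∫ ω, Real.log (1 + c * (q ω) ^ 2) ∂P := by
  have hS : MeasurableSet {ω | δ ≤ (q ω) ^ 2} :=
    measurableSet_le measurable_const (hqmeas.pow_const 2)
  have hmono : ∀ ω, Set.indicator {ω | δ ≤ (q ω) ^ 2}
      (fun _ => Real.log (1 + c * δ)) ω ≤ Real.log (1 + c * (q ω) ^ 2) := by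
    intro ω
    by_cases h : ω ∈ {ω | δ ≤ (q ω) ^ 2}
    · rw [Set.indicator_of_mem h]
      apply Real.log_le_log (by positivity)
      have : δ ≤ (q ω)^2 := h
      nlinarith
    · rw [Set.indicator_of_notMem h]
      apply Real.log_nonneg
      nlinarith [sq_nonneg (q ω)]
  have := integral_mono ((integrable_const (Real.log (1 + c * δ))).indicator hS)
    (aux_log_int P q hqmeas hint hc) hmono
  rwa [integral_indicator_const _ hS, smul_eq_mul, mul_comm] at this

lemma aux_phi_ub (hqmeas : Measurable q)
    (hint : Integrable (fun ω => Real.log (1 + (q ω) ^ 2)) P)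
    {c : ℝ} (hc : 1 ≤ c) :
    ∫ ω, Real.log (1 + c * (q ω) ^ 2) ∂P
      ≤ Real.log c + ∫ ω, Real.log (1 + (q ω) ^ 2) ∂P := by
  have hmono : ∀ ω, Real.log (1 + c * (q ω) ^ 2)
      ≤ Real.log c + Real.log (1 + (q ω) ^ 2) := by
    intro ω
    rw [← Real.log_mul (by positivity) (by nlinarith [sq_nonneg (q ω)])]
    apply Real.log_le_log (by nlinarith [sq_nonneg (q ω)])
    nlinarith [sq_nonneg (q ω)]
  have := integral_mono (aux_log_int P q hqmeas hint (by linarith))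
    ((integrable_const (Real.log c)).add hint) hmono
  simp only [Pi.add_apply] at this
  rwa [integral_add (integrable_const _) hint, integral_const, probReal_univ,
    one_smul] at this

lemma aux_exists_delta (hne : 0 < P {ω | q ω ≠ 0}) :
    ∃ δ : ℝ, 0 < δ ∧ 0 < P {ω | δ ≤ (q ω) ^ 2} := by
  by_contra h
  push_neg at h
  have hzero : ∀ n : ℕ, P {ω | 1/((n:ℝ)+1) ≤ (q ω) ^ 2} = 0 := by
    intro n
    have := h (1/((n:ℝ)+1)) (by positivity)
    exact le_antisymm this zero_le
  have hsub : {ω | q ω ≠ 0} ⊆ ⋃ n : ℕ, {ω | 1/((n:ℝ)+1) ≤ (q ω) ^ 2} := by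
    intro ω hω
    have hq : (0:ℝ) < (q ω)^2 := lt_of_le_of_ne (sq_nonneg _) (Ne.symm (pow_ne_zero 2 hω))
    obtain ⟨n, hn⟩ := exists_nat_one_div_lt hq
    exact Set.mem_iUnion.mpr ⟨n, le_of_lt hn⟩
  have := measure_mono (μ := P) hsub
  rw [measure_iUnion_null hzero] at this
  exact absurd (le_antisymm this zero_le) (ne_of_gt hne)

lemma aux_w_lb {E lo t : ℝ} (h1 : 1 ≤ lo) (h2 : lo ≤ t) (h3 : |E| < lo + 1/lo) :
    (lo + 1/lo - |E|)/2 ≤ t^2 - E^2*t^4/(t^2+1)^2 := by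
  have hlo : (0:ℝ) < lo := by linarith
  have ht : (1:ℝ) ≤ t := le_trans h1 h2
  have ht0 : (0:ℝ) < t := by linarith
  have hu : lo + 1/lo ≤ t + 1/t := by
    rw [← sub_nonneg]
    have heq : t + 1/t - (lo + 1/lo) = (t-lo)*(t*lo-1)/(t*lo) := by field_simp; ring
    rw [heq]
    apply div_nonneg (mul_nonneg (by linarith) (by nlinarith)) (by positivity)
  obtain ⟨α, hα⟩ : ∃ α : ℝ, α = lo + 1/lo - |E| := ⟨_, rfl⟩
  rw [← hα]
  have hα0 : 0 < α := by rw [hα]; linarith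
  have key : α*t ≤ (t^2+1) - |E| * t := by
    have h5 : α ≤ t + 1/t - |E| := by rw [hα]; linarith
    have h6 := mul_le_mul_of_nonneg_right h5 ht0.le
    have h7 : (t + 1/t - |E|)*t = t^2 + 1 - |E| * t := by field_simp
    linarith
  have key2 : 2*t ≤ (t^2+1) + |E| * t := by nlinarith [abs_nonneg E, sq_nonneg (t-1)]
  have key3 : 2*α*t^2 ≤ (t^2+1)^2 - E^2*t^2 := by
    have h8 : (0:ℝ) ≤ 2*t := by linarith
    have h9 : (0:ℝ) ≤ (t^2+1) - |E| * t := le_trans (by positivity) key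
    have := mul_le_mul key key2 h8 h9
    nlinarith [_root_.sq_abs E]
  have hd : (0:ℝ) < (t^2+1)^2 := by positivity
  have expand : t^2 - E^2*t^4/(t^2+1)^2 = (t^2*((t^2+1)^2 - E^2*t^2))/(t^2+1)^2 := by
    field_simp
  rw [expand, le_div_iff₀ hd]
  have h10 : (t^2+1)^2 ≤ 4*t^4 := by nlinarith [sq_nonneg (t^2-1)]
  nlinarith [mul_le_mul_of_nonneg_left key3 (sq_nonneg t), hα0.le,
    mul_le_mul_of_nonneg_left h10 hα0.le]

end Aux

set_option maxHeartbeats 1600000 in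
/-- Lemma 5.2 of the paper. For a symmetric random variable `q` with
`E[log(1+q²)] < ∞` and `P(q ≠ 0) > 0`, for every real `E` there is `ζ` in the open upper
half-plane with `|ζ| > 1` such that `Re(ζ + 1/ζ) + E = 0` and
`E[log(q²/(Im ζ)² + 1/|ζ|⁴)] = 0`. -/
theorem exists_zeta_symmetric {Ω : Type*} [MeasurableSpace Ω] (P : Measure Ω)
    [IsProbabilityMeasure P] (q : Ω → ℝ) (hqmeas : Measurable q)
    (hsymm : Measure.map q P = Measure.map (fun ω => -(q ω)) P)
    (hint : Integrable (fun ω => Real.log (1 + (q ω) ^ 2)) P)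
    (hne : 0 < P {ω | q ω ≠ 0}) :
    ∀ E : ℝ, ∃ ζ : ℂ, 0 < ζ.im ∧ 1 < ‖ζ‖ ∧ (ζ + 1 / ζ).re + E = 0 ∧
      (∫ ω, Real.log ((q ω) ^ 2 / ζ.im ^ 2 + 1 / ‖ζ‖ ^ 4) ∂P) = 0 := by
  intro E
  obtain ⟨δ, hδ, hPS⟩ := aux_exists_delta P q hne
  set m := (P {ω | δ ≤ (q ω) ^ 2}).toReal with hm
  have hm0 : 0 < m := ENNReal.toReal_pos (ne_of_gt hPS) (measure_ne_top P _)
  set K := ∫ ω, Real.log (1 + (q ω) ^ 2) ∂P with hK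
  have hK0 : 0 ≤ K := integral_nonneg fun ω => Real.log_nonneg (by nlinarith [sq_nonneg (q ω)])
  set tb := 1 + |E| + Real.sqrt (E^2 + Real.exp (K+1)) with htb
  have hsq0 : (0:ℝ) ≤ Real.sqrt (E^2 + Real.exp (K+1)) := Real.sqrt_nonneg _
  have htb1 : 1 < tb := by
    have : (0:ℝ) < Real.exp (K+1) := Real.exp_pos _
    have h := Real.sqrt_pos.mpr (by positivity : (0:ℝ) < E^2 + Real.exp (K+1))
    simp only [htb]; nlinarith [abs_nonneg E]
  have htbE : |E| < tb := by simp only [htb]; nlinarith [abs_nonneg E]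
  have htb2 : E^2 + Real.exp (K+1) ≤ tb^2 := by
    have h := Real.sq_sqrt (by positivity : (0:ℝ) ≤ E^2 + Real.exp (K+1))
    nlinarith [abs_nonneg E]
  set w : ℝ → ℝ := fun t => t^2 - E^2*t^4/(t^2+1)^2 with hwdef
  set x : ℝ → ℝ := fun t => -E*t^2/(t^2+1) with hxdef
  have hxsq : ∀ t : ℝ, w t = t^2 - (x t)^2 := by
    intro t
    have h : (t^2+1) ≠ 0 := by positivity
    simp only [hwdef, hxdef]
    field_simp
  set g : ℝ → ℝ := fun t => ∫ ω, Real.log ((q ω)^2 / w t + 1/t^4) ∂P with hgdef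
  -- representation of g
  have hgrepr : ∀ t : ℝ, 0 < w t → 1 ≤ t →
      g t = (∫ ω, Real.log (1 + (t^4 / w t) * (q ω)^2) ∂P) - 4 * Real.log t := by
    intro t hwt ht
    have ht0 : (0:ℝ) < t := by linarith
    have hptw : ∀ ω, Real.log ((q ω)^2 / w t + 1/t^4)
        = Real.log (1 + (t^4 / w t) * (q ω)^2) - Real.log (t^4) := by
      intro ω
      have heq : (q ω)^2 / w t + 1/t^4 = (1 + (t^4 / w t) * (q ω)^2) / t^4 := by
        field_simp
        ring
      rw [heq, Real.log_div (by positivity) (by positivity)]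
    simp only [hgdef, hptw]
    rw [integral_sub (aux_log_int P q hqmeas hint (by positivity))
      (integrable_const _), integral_const, probReal_univ, one_smul,
      Real.log_pow]
    push_cast
    ring
  have hwcont : Continuous w := by
    apply Continuous.sub (by fun_prop)
    exact Continuous.div (by fun_prop) (by fun_prop) (fun t => by positivity)
  -- the main reduction
  suffices hmain : ∀ lo : ℝ, 1 ≤ lo → |E| < lo + 1/lo → lo ≤ tb → 0 < g lo →
      ∃ ζ : ℂ, 0 < ζ.im ∧ 1 < ‖ζ‖ ∧ (ζ + 1 / ζ).re + E = 0 ∧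
      (∫ ω, Real.log ((q ω) ^ 2 / ζ.im ^ 2 + 1 / ‖ζ‖ ^ 4) ∂P) = 0 by
    rcases lt_or_ge (|E|) 2 with hE2 | hE2
    · -- case |E| < 2 : lo = 1
      apply hmain 1 le_rfl (by norm_num [hE2]) htb1.le
      have hw1 : 0 < w 1 := by
        have := aux_w_lb le_rfl le_rfl (show |E| < 1 + 1/1 by norm_num [hE2])
        simp only [hwdef] at this ⊢
        norm_num at this ⊢
        nlinarith
      have hc1 : (0:ℝ) < 1^4 / w 1 := by positivity
      rw [hgrepr 1 hw1 le_rfl]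
      have := aux_phi_lb P q hqmeas hint hδ hc1.le
      have hlogpos : 0 < Real.log (1 + (1^4 / w 1) * δ) := Real.log_pos (by nlinarith)
      simp only [Real.log_one]
      have : 0 < Real.log (1 + (1^4 / w 1) * δ) * m := mul_pos hlogpos hm0
      linarith [aux_phi_lb P q hqmeas hint hδ hc1.le]
    · -- case 2 ≤ |E|
      have hE0 : E ≠ 0 := by intro h; rw [h] at hE2; norm_num at hE2
      set s := Real.sqrt (E^2 - 4) with hs
      have hs2 : s^2 = E^2 - 4 := Real.sq_sqrt (by nlinarith [_root_.sq_abs E])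
      have hs0 : 0 ≤ s := Real.sqrt_nonneg _
      set t0 := (|E| + s)/2 with ht0def
      have ht01 : 1 ≤ t0 := by simp only [ht0def]; nlinarith
      have ht0pos : (0:ℝ) < t0 := by linarith
      have ht0u : t0 + 1/t0 = |E| := by
        have h : t0^2 - |E| * t0 + 1 = 0 := by
          simp only [ht0def]
          linear_combination hs2/4 - (_root_.sq_abs E)/4
        field_simp
        linear_combination h
      have hwt0 : w t0 = 0 := by
        have h2 : (t0^2+1)^2 = E^2*t0^2 := by
          have h : t0^2 + 1 = |E| * t0 := by
            have := ht0u
            field_simp at this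
            linarith
          rw [h]
          rw [mul_pow, _root_.sq_abs]
        simp only [hwdef]
        rw [h2]
        field_simp
        ring
      have ht0tb : t0 < tb := by
        have : t0 < |E| := by
          have h := ht0u
          have : 0 < 1/t0 := by positivity
          linarith
        linarith
      -- choose c1
      set c1 := (Real.exp ((4*Real.log tb + 1)/m) - 1)/δ with hc1def
      have hltb : 0 < Real.log tb := Real.log_pos htb1
      have hexp1 : 1 < Real.exp ((4*Real.log tb + 1)/m) := by
        rw [show (1:ℝ) = Real.exp 0 by simp]
        apply Real.exp_lt_exp.mpr
        positivity
      have hc1pos : 0 < c1 := by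
        apply div_pos (by linarith) hδ
      -- find ta near t0
      have hcw : ContinuousAt w t0 := hwcont.continuousAt
      rw [Metric.continuousAt_iff] at hcw
      obtain ⟨η, hη, hηs⟩ := hcw (1/c1) (by positivity)
      set ta := min (t0 + η/2) ((t0+tb)/2) with hta
      have hta1 : t0 < ta := by
        apply lt_min (by linarith) (by linarith)
      have hta2 : ta ≤ tb := le_trans (min_le_right _ _) (by linarith)
      have htaη : |ta - t0| < η := by
        rw [abs_of_pos (by linarith)]
        have : ta ≤ t0 + η/2 := min_le_left _ _
        linarith
      have hwta : w ta < 1/c1 := by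
        have := hηs (show dist ta t0 < η by rwa [Real.dist_eq])
        rw [Real.dist_eq, hwt0, sub_zero] at this
        exact lt_of_le_of_lt (le_abs_self _) this
      have htau : |E| < ta + 1/ta := by
        rw [← ht0u, ← sub_pos]
        have heq : ta + 1/ta - (t0 + 1/t0) = (ta-t0)*(ta*t0-1)/(ta*t0) := by
          have hta0 : ta ≠ 0 := (by linarith : (0:ℝ) < ta).ne'
          field_simp
          ring
        rw [heq]
        apply div_pos (mul_pos (by linarith) (by nlinarith)) (by positivity)
      have hwta0 : 0 < w ta := by
        have h := aux_w_lb (le_trans ht01 hta1.le) le_rfl htau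
        have hpos : 0 < (ta + 1/ta - |E|)/2 := by linarith
        simp only [hwdef]
        linarith
      apply hmain ta (by linarith) htau hta2
      -- show 0 < g ta
      rw [hgrepr ta hwta0 (by linarith)]
      have htapos : (0:ℝ) < ta := by linarith
      set c := ta^4 / w ta with hcdef
      have hc1c : c1 < c := by
        have h1 : (1:ℝ) ≤ ta^4 := one_le_pow₀ (by linarith : (1:ℝ) ≤ ta)
        have h2 : c1 < 1 / w ta := by
          rw [lt_div_iff₀ hwta0]
          calc c1 * w ta < c1 * (1/c1) := by
                apply mul_lt_mul_of_pos_left hwta hc1pos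
            _ = 1 := by field_simp
        calc c1 < 1 / w ta := h2
          _ ≤ ta^4 / w ta := by gcongr
      have hlb := aux_phi_lb P q hqmeas hint hδ (le_of_lt (lt_trans hc1pos hc1c))
      have hlog1 : Real.log (1 + c1*δ) = (4*Real.log tb + 1)/m := by
        have heq : 1 + c1*δ = Real.exp ((4*Real.log tb + 1)/m) := by
          simp only [hc1def]
          field_simp
          ring
        rw [heq, Real.log_exp]
      have hmono : Real.log (1 + c1*δ) ≤ Real.log (1 + c*δ) := by
        apply Real.log_le_log (by positivity)
        nlinarith
      have step : (4*Real.log tb + 1) ≤ Real.log (1 + c*δ) * m := by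
        have h := mul_le_mul_of_nonneg_right hmono hm0.le
        rw [hlog1] at h
        calc 4*Real.log tb + 1 = (4*Real.log tb + 1)/m * m := by field_simp
          _ ≤ Real.log (1 + c*δ) * m := h
      have hlogta : Real.log ta ≤ Real.log tb := Real.log_le_log htapos hta2
      linarith
  -- proof of hmain
  intro lo hlo1 hloE hlotb hglo
  obtain ⟨α, hαdef⟩ : ∃ α : ℝ, α = (lo + 1/lo - |E|)/2 := ⟨_, rfl⟩
  have hα0 : 0 < α := by rw [hαdef]; linarith
  have hwlb : ∀ t ∈ Set.Icc lo tb, α ≤ w t := by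
    intro t ht
    have h := aux_w_lb hlo1 ht.1 hloE
    simp only [hwdef]
    rw [hαdef]
    linarith
  have hwpos : ∀ t ∈ Set.Icc lo tb, 0 < w t := fun t ht => lt_of_lt_of_le hα0 (hwlb t ht)
  have ht1mem : ∀ t ∈ Set.Icc lo tb, 1 ≤ t := fun t ht => le_trans hlo1 ht.1
  -- continuity of g on [lo, tb]
  have hgc : ContinuousOn g (Set.Icc lo tb) := by
    rw [hgdef]
    apply continuousOn_of_dominated
      (bound := fun ω => (4*Real.log tb + Real.log (max 1 (1/α))) + Real.log (1 + (q ω)^2))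
    · intro t _
      exact ((((hqmeas.pow_const 2).div_const (w t)).add_const (1/t^4)).log).aestronglyMeasurable
    · intro t ht
      filter_upwards with ω
      have hwt := hwlb t ht
      have hw0 := hwpos t ht
      have ht1 : 1 ≤ t := ht1mem t ht
      have htb' : t ≤ tb := ht.2
      have ht0 : (0:ℝ) < t := by linarith
      have hq0 : (0:ℝ) ≤ (q ω)^2 := sq_nonneg _
      have hv0 : 0 < (q ω)^2 / w t + 1/t^4 := by positivity
      have hv1 : 1/tb^4 ≤ (q ω)^2 / w t + 1/t^4 := by
        have h1 : t^4 ≤ tb^4 := pow_le_pow_left₀ (by linarith) htb' 4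
        have h2 : 1/tb^4 ≤ 1/t^4 := by
          apply one_div_le_one_div_of_le (by positivity) h1
        have h3 : 0 ≤ (q ω)^2 / w t := by positivity
        linarith
      have hv2 : (q ω)^2 / w t + 1/t^4 ≤ max 1 (1/α) * (1 + (q ω)^2) := by
        have h1 : (q ω)^2 / w t ≤ (q ω)^2 * (1/α) := by
          rw [div_eq_mul_inv, one_div]
          exact mul_le_mul_of_nonneg_left (inv_anti₀ hα0 hwt) hq0
        have h2 : 1/t^4 ≤ 1 := by
          rw [div_le_one (by positivity)]
          exact one_le_pow₀ ht1
        have ha : 1/α ≤ max 1 (1/α) := le_max_right _ _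
        have hb : (1:ℝ) ≤ max 1 (1/α) := le_max_left _ _
        nlinarith
      rw [Real.norm_eq_abs, abs_le]
      have hmax1 : 0 ≤ Real.log (max 1 (1/α)) := Real.log_nonneg (le_max_left _ _)
      have hq1 : 0 ≤ Real.log (1 + (q ω)^2) := Real.log_nonneg (by nlinarith)
      have hltb : 0 ≤ Real.log tb := Real.log_nonneg htb1.le
      constructor
      · have h4 : Real.log (1/tb^4) ≤ Real.log ((q ω)^2 / w t + 1/t^4) :=
          Real.log_le_log (by positivity) hv1
        rw [Real.log_div one_ne_zero (by positivity), Real.log_one, Real.log_pow] at h4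
        push_cast at h4
        linarith
      · have h5 : Real.log ((q ω)^2 / w t + 1/t^4) ≤ Real.log (max 1 (1/α) * (1 + (q ω)^2)) :=
          Real.log_le_log hv0 hv2
        rw [Real.log_mul (by positivity) (by nlinarith)] at h5
        linarith
    · have h := (integrable_const ((4*Real.log tb + Real.log (max 1 (1/α))) : ℝ)).add hint
      simpa [Pi.add_apply] using h
    · filter_upwards with ω
      apply ContinuousOn.log
      · apply ContinuousOn.add
        · apply ContinuousOn.div continuousOn_const hwcont.continuousOn
          exact fun t ht => ne_of_gt (hwpos t ht)
        · apply ContinuousOn.div continuousOn_const (by fun_prop)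
          intro t ht
          have := ht1mem t ht
          positivity
      · intro t ht
        have hw0 := hwpos t ht
        have ht1 := ht1mem t ht
        have : (0:ℝ) < (q ω)^2 / w t + 1/t^4 := by positivity
        exact ne_of_gt this
  -- g tb < 0
  have htbmem : tb ∈ Set.Icc lo tb := ⟨hlotb, le_rfl⟩
  have hwtb : 0 < w tb := hwpos tb htbmem
  have hwtb2 : Real.exp (K+1) ≤ w tb := by
    simp only [hwdef]
    have h1 : E^2*tb^4/(tb^2+1)^2 ≤ E^2 := by
      rw [div_le_iff₀ (by positivity)]
      nlinarith [sq_nonneg E, sq_nonneg tb]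
    nlinarith [_root_.sq_abs E]
  have hgtb : g tb < 0 := by
    have hctb : (1:ℝ) ≤ tb^4 / w tb := by
      rw [le_div_iff₀ hwtb]
      have h2 : 0 ≤ E^2*tb^4/(tb^2+1)^2 := by positivity
      have h3 : w tb ≤ tb^2 := by simp only [hwdef]; linarith
      have h4 : tb^2 ≤ tb^4 := by
        nlinarith [mul_nonneg (show (0:ℝ) ≤ tb^2 - 1 by nlinarith) (sq_nonneg tb)]
      linarith
    have hub := aux_phi_ub P q hqmeas hint hctb
    rw [hgrepr tb hwtb (by linarith)]
    have hlogc : Real.log (tb^4 / w tb) = 4*Real.log tb - Real.log (w tb) := by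
      rw [Real.log_div (by positivity) (ne_of_gt hwtb), Real.log_pow]
      push_cast
      ring
    have hlogw : K + 1 ≤ Real.log (w tb) := by
      rw [← Real.log_exp (K+1)]
      exact Real.log_le_log (Real.exp_pos _) hwtb2
    rw [← hK] at hub
    linarith
  -- intermediate value theorem
  obtain ⟨t', ht'mem, hgt'⟩ := intermediate_value_Icc' hlotb hgc ⟨hgtb.le, hglo.le⟩
  have ht'lo : lo < t' := by
    rcases eq_or_lt_of_le ht'mem.1 with h | h
    · exfalso; rw [h] at hglo; linarith [hgt', hglo]
    · exact h
  have ht'1 : 1 < t' := by linarith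
  have ht'pos : (0:ℝ) < t' := by linarith
  have hwt' : 0 < w t' := hwpos t' ht'mem
  have hsq : Real.sqrt (w t') * Real.sqrt (w t') = w t' := Real.mul_self_sqrt hwt'.le
  have hnorm : x t' * x t' + Real.sqrt (w t') * Real.sqrt (w t') = t'^2 := by
    rw [hsq]
    linear_combination (hxsq t')
  refine ⟨⟨x t', Real.sqrt (w t')⟩, ?_, ?_, ?_, ?_⟩
  · exact Real.sqrt_pos.mpr hwt'
  · have habs : ‖(⟨x t', Real.sqrt (w t')⟩ : ℂ)‖ = t' := by
      rw [Complex.norm_def, Complex.normSq_mk, hnorm]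
      exact Real.sqrt_sq ht'pos.le
    rw [habs]
    exact ht'1
  · have hnormSq : Complex.normSq ⟨x t', Real.sqrt (w t')⟩ = t'^2 := by
      rw [Complex.normSq_mk, hnorm]
    rw [Complex.add_re, one_div, Complex.inv_re, hnormSq]
    show x t' + x t' / t'^2 + E = 0
    simp only [hxdef]
    field_simp
    ring
  · have habs : ‖(⟨x t', Real.sqrt (w t')⟩ : ℂ)‖ = t' := by
      rw [Complex.norm_def, Complex.normSq_mk, hnorm]
      exact Real.sqrt_sq ht'pos.le
    have him : (⟨x t', Real.sqrt (w t')⟩ : ℂ).im = Real.sqrt (w t') := rfl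
    rw [him, habs]
    simp only [Real.sq_sqrt hwt'.le]
    exact hgt'
end

section
/- For all real numbers a, b, c, d with ad − bc = 1, define γ : ℝ → ℂ by γ(t) = (a·i·eᵗ + b)/(c·i·eᵗ + d). Then the function t ↦ log( Im γ(t) ) is concave on ℝ. -/
open Complex

private lemma aux_hasDerivAt (c d t : ℝ) :
    HasDerivAt (fun t : ℝ => c ^ 2 * Real.exp t ^ 2 + d ^ 2)
      (2 * c ^ 2 * Real.exp t ^ 2) t := by
  have h1 : HasDerivAt (fun t : ℝ => Real.exp t ^ 2) (2 * Real.exp t ^ 2) t := by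
    have := (Real.hasDerivAt_exp t).fun_pow 2
    simpa [pow_two, mul_comm, mul_assoc, mul_left_comm] using this
  have := (h1.const_mul (c ^ 2)).add_const (d ^ 2)
  refine this.congr_deriv ?_
  ring

private lemma aux_pos (c d : ℝ) (hcd : c ≠ 0 ∨ d ≠ 0) (t : ℝ) :
    0 < c ^ 2 * Real.exp t ^ 2 + d ^ 2 := by
  rcases hcd with hc | hd
  · have : 0 < c ^ 2 * Real.exp t ^ 2 :=
      mul_pos (by positivity) (by positivity)
    nlinarith [sq_nonneg d]
  · have : 0 < d ^ 2 := by positivity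
    nlinarith [mul_nonneg (sq_nonneg c) (sq_nonneg (Real.exp t))]

private lemma aux_convex (c d : ℝ) (hcd : c ≠ 0 ∨ d ≠ 0) :
    ConvexOn ℝ Set.univ (fun t : ℝ => Real.log (c ^ 2 * Real.exp t ^ 2 + d ^ 2)) := by
  set g : ℝ → ℝ := fun t => Real.log (c ^ 2 * Real.exp t ^ 2 + d ^ 2) with hg
  set φ : ℝ → ℝ := fun t => (2 * c ^ 2 * Real.exp t ^ 2) / (c ^ 2 * Real.exp t ^ 2 + d ^ 2)
    with hφ
  have hgd : ∀ t, HasDerivAt g (φ t) t := fun t =>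
    (aux_hasDerivAt c d t).log (ne_of_gt (aux_pos c d hcd t))
  have hderiv : deriv g = φ := funext fun t => (hgd t).deriv
  have hφd : ∀ t, HasDerivAt φ
      (4 * c ^ 2 * d ^ 2 * Real.exp t ^ 2 / (c ^ 2 * Real.exp t ^ 2 + d ^ 2) ^ 2) t := by
    intro t
    have hN : HasDerivAt (fun t : ℝ => 2 * c ^ 2 * Real.exp t ^ 2)
        (2 * (2 * c ^ 2 * Real.exp t ^ 2)) t := by
      have h1 : HasDerivAt (fun t : ℝ => Real.exp t ^ 2) (2 * Real.exp t ^ 2) t := by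
        have := (Real.hasDerivAt_exp t).fun_pow 2
        simpa [pow_two, mul_comm, mul_assoc, mul_left_comm] using this
      have := h1.const_mul (2 * c ^ 2)
      refine this.congr_deriv ?_
      ring
    have hu := aux_hasDerivAt c d t
    have hne := ne_of_gt (aux_pos c d hcd t)
    have := hN.div hu hne
    refine this.congr_deriv ?_
    field_simp
    ring
  have hderiv2 : deriv (deriv g) = fun t =>
      4 * c ^ 2 * d ^ 2 * Real.exp t ^ 2 / (c ^ 2 * Real.exp t ^ 2 + d ^ 2) ^ 2 := by
    rw [hderiv]; exact funext fun t => (hφd t).deriv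
  refine convexOn_univ_of_deriv2_nonneg (fun t => (hgd t).differentiableAt)
    ?_ ?_
  · rw [hderiv]; exact fun t => (hφd t).differentiableAt
  · intro x
    rw [Function.iterate_succ, Function.iterate_one, Function.comp_apply, hderiv2]
    positivity

/-- Geodesic concavity of `z ↦ log(Im z)` on the hyperbolic upper half-plane: along every
unit-speed geodesic `γ(t) = (a i eᵗ + b)/(c i eᵗ + d)` (with `ad − bc = 1`), the function
`t ↦ log(Im γ(t))` is concave on `ℝ`. -/
theorem geodesic_concavity_log_im (a b c d : ℝ) (h : a * d - b * c = 1) (γ : ℝ → ℂ)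
    (hγ : ∀ t : ℝ, γ t = ((a : ℂ) * Complex.I * (Real.exp t : ℂ) + (b : ℂ)) /
        ((c : ℂ) * Complex.I * (Real.exp t : ℂ) + (d : ℂ))) :
    ConcaveOn ℝ Set.univ (fun t : ℝ => Real.log ((γ t).im)) := by
  have hcd : c ≠ 0 ∨ d ≠ 0 := by
    by_contra hc
    push_neg at hc
    rw [hc.1, hc.2] at h
    simp at h
  have him : ∀ t : ℝ, (γ t).im = Real.exp t / (c ^ 2 * Real.exp t ^ 2 + d ^ 2) := by
    intro t
    rw [hγ t]
    simp only [Complex.div_im, Complex.add_im, Complex.add_re, Complex.mul_im, Complex.mul_re,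
      Complex.I_re, Complex.I_im, Complex.ofReal_re, Complex.ofReal_im, Complex.normSq_apply]
    ring_nf
    linear_combination (Real.exp t * (Real.exp t ^ 2 * c ^ 2 + d ^ 2)⁻¹) * h
  have heq : (fun t : ℝ => Real.log ((γ t).im)) =
      fun t : ℝ => t - Real.log (c ^ 2 * Real.exp t ^ 2 + d ^ 2) := by
    funext t
    rw [him t, Real.log_div (Real.exp_ne_zero t) (ne_of_gt (aux_pos c d hcd t)),
      Real.log_exp]
  rw [heq]
  have h1 : ConcaveOn ℝ Set.univ (fun t : ℝ => t) :=
    (LinearMap.id : ℝ →ₗ[ℝ] ℝ).concaveOn convex_univ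
  exact h1.sub (aux_convex c d hcd)
end

section
/- Let K ∈ (0, ∞), let ν : ℝ → [0, ∞) be a bounded measurable probability density vanishing outside [−K, K] with essential supremum ‖ν‖_∞, and let s ∈ (0, 1/2). Then for all w, z, z′ ∈ ℂ: ∫_ℝ | |w + z − q|^{−s} − |w + z′ − q|^{−s} | ν(q) dq ≤ (2 ‖ν‖_∞ K^{1−2s} / (1 − 2s)) · |z − z′|^s. -/
open MeasureTheory Complex intervalIntegral


-- subadditivity for real rpow, p ∈ [0,1]
lemma fm_rpow_sub_le {p x y : ℝ} (hp0 : 0 ≤ p) (hp1 : p ≤ 1) (hx : 0 ≤ x) (hxy : x ≤ y) :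
    y ^ p - x ^ p ≤ (y - x) ^ p := by
  have hy : 0 ≤ y := hx.trans hxy
  have hsub : (x + (y - x)) ^ p ≤ x ^ p + (y - x) ^ p := by
    have := NNReal.rpow_add_le_add_rpow (x.toNNReal) ((y - x).toNNReal) hp0 hp1
    have h1 : ((x.toNNReal + (y - x).toNNReal : NNReal) : ℝ) = x + (y - x) := by
      simp [Real.coe_toNNReal, hx, sub_nonneg.mpr hxy]
    calc (x + (y - x)) ^ p = ((x.toNNReal + (y - x).toNNReal : NNReal) : ℝ) ^ p := by rw [h1]
      _ = (((x.toNNReal + (y - x).toNNReal) ^ p : NNReal) : ℝ) := by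
          rw [← NNReal.coe_rpow]
      _ ≤ ((x.toNNReal ^ p + (y - x).toNNReal ^ p : NNReal) : ℝ) := by exact_mod_cast this
      _ = x ^ p + (y - x) ^ p := by
          push_cast [← NNReal.coe_rpow, Real.coe_toNNReal, hx, sub_nonneg.mpr hxy]
          simp [Real.coe_toNNReal _ hx, Real.coe_toNNReal _ (sub_nonneg.mpr hxy)]
  have : y ^ p ≤ x ^ p + (y - x) ^ p := by
    simpa using hsub
  linarith

-- concavity two-point
lemma fm_rpow_add_le {p x y : ℝ} (hp0 : 0 ≤ p) (hp1 : p ≤ 1) (hx : 0 ≤ x) (hy : 0 ≤ y) :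
    x ^ p + y ^ p ≤ 2 * ((x + y) / 2) ^ p := by
  have hc := (Real.concaveOn_rpow hp0 hp1).2 (Set.mem_Ici.mpr hx) (Set.mem_Ici.mpr hy)
    (by norm_num : (0:ℝ) ≤ 1/2) (by norm_num : (0:ℝ) ≤ 1/2) (by norm_num)
  simp only [smul_eq_mul] at hc
  have h1 : (1/2 : ℝ) * x + (1/2) * y = (x + y)/2 := by ring
  rw [h1] at hc
  linarith

-- pointwise bound, assuming x ≤ y
lemma fm_pointwise_aux {s d x y : ℝ} (hs0 : 0 < s) (hs1 : s < 1/2)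
    (hx : 0 < x) (hxy : x ≤ y) (hd : y - x ≤ d) :
    |x ^ (-s) - y ^ (-s)| ≤ d ^ s * ((x ^ (-(2*s)) + y ^ (-(2*s))) / 2) := by
  have hy : 0 < y := hx.trans_le hxy
  have hd0 : 0 ≤ d := le_trans (by linarith) hd
  have hxs : (0:ℝ) < x ^ s := Real.rpow_pos_of_pos hx s
  have hys : (0:ℝ) < y ^ s := Real.rpow_pos_of_pos hy s
  have hmono : y ^ (-s) ≤ x ^ (-s) := Real.rpow_le_rpow_of_nonpos hx hxy (by linarith)
  rw [_root_.abs_of_nonneg (by linarith)]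
  have hxneg : x ^ (-s) = (x ^ s)⁻¹ := by rw [Real.rpow_neg hx.le]
  have hyneg : y ^ (-s) = (y ^ s)⁻¹ := by rw [Real.rpow_neg hy.le]
  have key : x ^ (-s) - y ^ (-s) = (y ^ s - x ^ s) * (x ^ (-s) * y ^ (-s)) := by
    rw [hxneg, hyneg]
    field_simp
  rw [key]
  have h1 : y ^ s - x ^ s ≤ d ^ s := by
    have := fm_rpow_sub_le (le_of_lt hs0) (by linarith) hx.le hxy
    have h2 : (y - x) ^ s ≤ d ^ s := Real.rpow_le_rpow (by linarith) hd hs0.le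
    linarith
  have hamgm : x ^ (-s) * y ^ (-s) ≤ (x ^ (-(2*s)) + y ^ (-(2*s))) / 2 := by
    have hsq : (0:ℝ) ≤ (x ^ (-s) - y ^ (-s))^2 := sq_nonneg _
    have hx2 : x ^ (-(2*s)) = x ^ (-s) * x ^ (-s) := by
      rw [← Real.rpow_add hx]; ring_nf
    have hy2 : y ^ (-(2*s)) = y ^ (-s) * y ^ (-s) := by
      rw [← Real.rpow_add hy]; ring_nf
    nlinarith
  have hprodnonneg : (0:ℝ) ≤ x ^ (-s) * y ^ (-s) :=
    mul_nonneg (Real.rpow_nonneg hx.le _) (Real.rpow_nonneg hy.le _)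
  calc (y ^ s - x ^ s) * (x ^ (-s) * y ^ (-s))
      ≤ d ^ s * (x ^ (-s) * y ^ (-s)) := by
        apply mul_le_mul_of_nonneg_right h1 hprodnonneg
    _ ≤ d ^ s * ((x ^ (-(2*s)) + y ^ (-(2*s))) / 2) := by
        apply mul_le_mul_of_nonneg_left hamgm (Real.rpow_nonneg hd0 s)

-- symmetric version
lemma fm_pointwise {s d x y : ℝ} (hs0 : 0 < s) (hs1 : s < 1/2)
    (hx : 0 < x) (hy : 0 < y) (hd : |x - y| ≤ d) :
    |x ^ (-s) - y ^ (-s)| ≤ d ^ s * ((x ^ (-(2*s)) + y ^ (-(2*s))) / 2) := by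
  rcases le_total x y with h | h
  · refine fm_pointwise_aux hs0 hs1 hx h ?_
    rw [abs_sub_comm] at hd
    exact (abs_le.mp hd).2
  · rw [abs_sub_comm, add_comm (x ^ (-(2*s)))]
    exact fm_pointwise_aux hs0 hs1 hy h (abs_le.mp hd).2


-- interval integrability of |u|^r on nonnegative intervals
lemma fm_ii_nn {r : ℝ} (hr : -1 < r) {c d : ℝ} (hc : 0 ≤ c) (hd : 0 ≤ d) :
    IntervalIntegrable (fun u : ℝ => |u| ^ r) volume c d := by
  apply (intervalIntegrable_rpow' hr (a := c) (b := d)).congr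
  intro u hu
  have hu0 : 0 < u := lt_of_le_of_lt (le_min hc hd) hu.1
  show u ^ r = |u| ^ r
  rw [abs_of_pos hu0]

lemma fm_ii {r : ℝ} (hr : -1 < r) (a b : ℝ) :
    IntervalIntegrable (fun u : ℝ => |u| ^ r) volume a b := by
  have hneg : ∀ c d : ℝ, d ≤ 0 → c ≤ 0 →
      IntervalIntegrable (fun u : ℝ => |u| ^ r) volume c d := by
    intro c d hd hc
    have := (IntervalIntegrable.iff_comp_neg (by simp)).mp (fm_ii_nn hr (neg_nonneg.mpr hc) (neg_nonneg.mpr hd))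
    simpa [abs_neg] using this
  -- go through 0
  have h0 : ∀ c : ℝ, IntervalIntegrable (fun u : ℝ => |u| ^ r) volume c 0 := by
    intro c
    rcases le_total 0 c with h | h
    · exact fm_ii_nn hr h le_rfl
    · exact hneg c 0 le_rfl h
  exact (h0 a).trans ((h0 b).symm)

-- value on nonnegative interval
lemma fm_int_nn {r : ℝ} (hr : -1 < r) {c d : ℝ} (hc : 0 ≤ c) (hd : 0 ≤ d) :
    ∫ u in c..d, |u| ^ r = (d ^ (r + 1) - c ^ (r + 1)) / (r + 1) := by
  rw [← integral_rpow (Or.inl hr)]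
  apply integral_congr
  intro u hu
  have hu0 : 0 ≤ u := by
    have h1 : min c d ≤ u := hu.1
    have : 0 ≤ min c d := le_min hc hd
    linarith [Set.uIcc_subset_uIcc_iff_le.mp (le_refl (Set.uIcc c d))]
  simp only [_root_.abs_of_nonneg hu0]



lemma fm_interval_bound {s K : ℝ} (hs0 : 0 < s) (hs1 : s < 1/2) (hK : 0 < K) (t : ℝ) :
    ∫ q in (-K)..K, |q - t| ^ (-(2*s)) ≤ 2 * K ^ (1 - 2*s) / (1 - 2*s) := by
  have hr : (-1 : ℝ) < -(2*s) := by linarith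
  set r : ℝ := -(2*s) with hrdef
  set p : ℝ := 1 - 2*s with hpdef
  have hp0 : 0 < p := by simp only [hpdef]; linarith
  have hp1 : p ≤ 1 := by simp only [hpdef]; linarith
  have hrp : r + 1 = p := by simp [hrdef, hpdef]; ring
  have h2K : (2*K) ^ p ≤ 2 * K ^ p := by
    rw [Real.mul_rpow (by norm_num) hK.le]
    have : (2:ℝ) ^ p ≤ 2 := by
      calc (2:ℝ) ^ p ≤ (2:ℝ) ^ (1:ℝ) := Real.rpow_le_rpow_of_exponent_le one_le_two hp1
      _ = 2 := Real.rpow_one 2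
    exact mul_le_mul_of_nonneg_right this (Real.rpow_nonneg hK.le p)
  rw [show (fun q : ℝ => |q - t| ^ r) = (fun u : ℝ => |u| ^ r) ∘ (fun q => q - t) from rfl]
  rw [show ∫ q in (-K)..K, ((fun u : ℝ => |u| ^ r) ∘ (fun q => q - t)) q
      = ∫ u in (-K - t)..(K - t), |u| ^ r from integral_comp_sub_right (fun u : ℝ => |u| ^ r) t]
  set a : ℝ := -K - t with hadef
  set b : ℝ := K - t with hbdef
  have hba : b - a = 2*K := by simp [hadef, hbdef]; ring
  have hab : a ≤ b := by simp [hadef, hbdef]; linarith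
  rcases le_or_gt 0 a with ha | ha
  · have hb : 0 ≤ b := ha.trans hab
    rw [fm_int_nn hr ha hb, hrp]
    have h1 : b ^ p - a ^ p ≤ (2*K) ^ p := by
      have := fm_rpow_sub_le hp0.le hp1 ha hab
      rwa [hba] at this
    have : b ^ p - a ^ p ≤ 2 * K ^ p := h1.trans h2K
    gcongr
  · rcases le_or_gt b 0 with hb | hb
    · have key : ∫ u in a..b, |u| ^ r = ∫ u in (-b)..(-a), |u| ^ r := by
        rw [show ∫ u in (-b)..(-a), |u| ^ r = ∫ u in a..b, |(-u)| ^ r by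
          rw [integral_comp_neg (fun u : ℝ => |u| ^ r)]]
        simp [abs_neg]
      rw [key, fm_int_nn hr (neg_nonneg.mpr hb) (neg_nonneg.mpr ha.le), hrp]
      have h1 : (-a) ^ p - (-b) ^ p ≤ (2*K) ^ p := by
        have := fm_rpow_sub_le hp0.le hp1 (neg_nonneg.mpr hb) (by linarith : -b ≤ -a)
        have heq : -a - -b = 2*K := by linarith
        rwa [heq] at this
      have : (-a) ^ p - (-b) ^ p ≤ 2 * K ^ p := h1.trans h2K
      gcongr
    · -- a < 0 < b : split at 0
      have hsplit : ∫ u in a..b, |u| ^ r = (∫ u in a..(0:ℝ), |u| ^ r) + ∫ u in (0:ℝ)..b, |u| ^ r :=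
        (integral_add_adjacent_intervals (fm_ii hr a 0) (fm_ii hr 0 b)).symm
      have hneg : ∫ u in a..(0:ℝ), |u| ^ r = (-a) ^ p / p := by
        have key : ∫ u in a..(0:ℝ), |u| ^ r = ∫ u in (0:ℝ)..(-a), |u| ^ r := by
          rw [show ∫ u in (0:ℝ)..(-a), |u| ^ r = ∫ u in a..(0:ℝ), |(-u)| ^ r by
            rw [integral_comp_neg (fun u : ℝ => |u| ^ r)]; norm_num]
          simp [abs_neg]
        rw [key, fm_int_nn hr le_rfl (neg_nonneg.mpr ha.le), hrp]
        rw [Real.zero_rpow hp0.ne', sub_zero]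
      have hpos : ∫ u in (0:ℝ)..b, |u| ^ r = b ^ p / p := by
        rw [fm_int_nn hr le_rfl hb.le, hrp, Real.zero_rpow hp0.ne', sub_zero]
      rw [hsplit, hneg, hpos]
      have hcc : (-a) ^ p + b ^ p ≤ 2 * K ^ p := by
        have := fm_rpow_add_le hp0.le hp1 (neg_nonneg.mpr ha.le) hb.le
        have heq : (-a + b) / 2 = K := by linarith
        rwa [heq] at this
      rw [← add_div]
      gcongr

lemma fm_measurable_rpow (r : ℝ) : Measurable (fun x : ℝ => x ^ r) := by
  apply measurable_of_continuousOn_compl_singleton (0:ℝ)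
  exact ContinuousOn.rpow_const continuousOn_id (fun x hx => Or.inl (by simpa using hx))

lemma fm_moment {K : ℝ} (hK : 0 < K) {ν : ℝ → ℝ} (hνmeas : Measurable ν)
    (hνnonneg : ∀ q, 0 ≤ ν q) (hνsupp : ∀ q, q ∉ Set.Icc (-K) K → ν q = 0)
    {Cν : ℝ} (hνbd : ∀ᵐ q : ℝ, ν q ≤ Cν) (hCν : 0 ≤ Cν)
    {s : ℝ} (hs0 : 0 < s) (hs1 : s < 1/2) (c : ℂ) :
    Integrable (fun q : ℝ => (‖c - (q:ℂ)‖) ^ (-(2*s)) * ν q) ∧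
    ∫ q : ℝ, (‖c - (q:ℂ)‖) ^ (-(2*s)) * ν q
      ≤ Cν * (2 * K ^ (1 - 2*s) / (1 - 2*s)) := by
  have hr : (-1:ℝ) < -(2*s) := by linarith
  set r : ℝ := -(2*s) with hrdef
  set t : ℝ := c.re with htdef
  set B : ℝ → ℝ := Set.indicator (Set.Icc (-K) K) (fun q => Cν * |q - t| ^ r) with hBdef
  -- integrability of B
  have hBint : Integrable B := by
    rw [hBdef, integrable_indicator_iff measurableSet_Icc]
    have h1 : IntervalIntegrable (fun q : ℝ => |q - t| ^ r) volume (-K) K := by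
      have := (fm_ii hr (-K - t) (K - t)).comp_sub_right t
      simpa using this
    have h2 := ((intervalIntegrable_iff_integrableOn_Icc_of_le (by linarith : (-K:ℝ) ≤ K)).mp h1)
    exact h2.const_mul Cν
  -- a.e. pointwise bound
  have h_ae_ne : ∀ᵐ q : ℝ, q ≠ t := by
    have : volume ({t} : Set ℝ) = 0 := measure_singleton t
    filter_upwards [measure_eq_zero_iff_ae_notMem.mp this] with q hq
    simpa using hq
  have hle : ∀ᵐ q : ℝ, (‖c - (q:ℂ)‖) ^ r * ν q ≤ B q := by
    filter_upwards [hνbd, h_ae_ne] with q hqbd hqne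
    by_cases hq : q ∈ Set.Icc (-K) K
    · rw [hBdef, Set.indicator_of_mem hq]
      have habs : |q - t| ≤ ‖c - (q:ℂ)‖ := by
        have := Complex.abs_re_le_norm (c - (q:ℂ))
        simpa [htdef, abs_sub_comm] using this
      have hpos : 0 < |q - t| := abs_pos.mpr (sub_ne_zero.mpr hqne)
      have h1 : (‖c - (q:ℂ)‖) ^ r ≤ |q - t| ^ r :=
        Real.rpow_le_rpow_of_nonpos hpos habs (by rw [hrdef]; linarith)
      calc (‖c - (q:ℂ)‖) ^ r * ν q ≤ |q - t| ^ r * Cν :=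
            mul_le_mul h1 hqbd (hνnonneg q) (Real.rpow_nonneg (abs_nonneg _) r)
        _ = Cν * |q - t| ^ r := by ring
    · rw [hBdef, Set.indicator_of_notMem hq, hνsupp q hq, mul_zero]
  -- measurability
  have hmeas : AEStronglyMeasurable (fun q : ℝ => (‖c - (q:ℂ)‖) ^ r * ν q) volume := by
    apply Measurable.aestronglyMeasurable
    exact ((fm_measurable_rpow (-(2*s))).comp
      (continuous_norm.comp (by continuity : Continuous fun q : ℝ => c - (q:ℂ))).measurable).mul hνmeas
  have hnonneg : ∀ q : ℝ, 0 ≤ (‖c - (q:ℂ)‖) ^ r * ν q := fun q =>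
    mul_nonneg (Real.rpow_nonneg (norm_nonneg _) r) (hνnonneg q)
  have hInt : Integrable (fun q : ℝ => (‖c - (q:ℂ)‖) ^ r * ν q) := by
    apply hBint.mono' hmeas
    filter_upwards [hle] with q hq
    rwa [Real.norm_eq_abs, _root_.abs_of_nonneg (hnonneg q)]
  refine ⟨hInt, ?_⟩
  calc ∫ q : ℝ, (‖c - (q:ℂ)‖) ^ r * ν q ≤ ∫ q : ℝ, B q :=
        integral_mono_ae hInt hBint hle
    _ = Cν * ∫ q in Set.Icc (-K) K, |q - t| ^ r := by
        rw [hBdef, MeasureTheory.integral_indicator measurableSet_Icc, MeasureTheory.integral_const_mul]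
    _ = Cν * ∫ q in (-K)..K, |q - t| ^ r := by
        rw [integral_Icc_eq_integral_Ioc, intervalIntegral.integral_of_le (by linarith : (-K:ℝ) ≤ K)]
    _ ≤ Cν * (2 * K ^ (1 - 2*s) / (1 - 2*s)) := by
        have := fm_interval_bound hs0 hs1 hK t
        exact mul_le_mul_of_nonneg_left this hCν


/-- Hölder-type continuity in the spectral parameter (cf. (6.4)–(6.5) of the paper): for a
bounded probability density `ν` supported in `[−K, K]` with (essential) bound `Cν` and
`s ∈ (0, 1/2)`, for all `w, z, z' ∈ ℂ`,
`∫ | |w+z−q|^{−s} − |w+z'−q|^{−s} | ν(q) dq ≤ (2 Cν K^{1−2s}/(1−2s)) |z − z'|^s`. -/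
theorem fractional_moment_holder_continuity (K : ℝ) (hK : 0 < K) (ν : ℝ → ℝ)
    (hνmeas : Measurable ν) (hνnonneg : ∀ q, 0 ≤ ν q)
    (hνsupp : ∀ q, q ∉ Set.Icc (-K) K → ν q = 0)
    (hνprob : ∫ q : ℝ, ν q = 1)
    (Cν : ℝ) (hνbd : ∀ᵐ q : ℝ, ν q ≤ Cν)
    (s : ℝ) (hs0 : 0 < s) (hs1 : s < 1 / 2) :
    ∀ w z z' : ℂ,
      (∫ q : ℝ, |(‖w + z - (q : ℂ)‖) ^ (-s)
          - (‖w + z' - (q : ℂ)‖) ^ (-s)| * ν q) ≤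
        (2 * Cν * K ^ (1 - 2 * s) / (1 - 2 * s)) * (‖z - z'‖) ^ s := by
  intro w z z'
  have hCν : 0 ≤ Cν := by
    by_contra h
    push_neg at h
    have hbad : ∀ᵐ q : ℝ, False := by
      filter_upwards [hνbd] with q hq
      exact absurd (le_trans (hνnonneg q) hq) (not_le.mpr h)
    obtain ⟨q, hq⟩ := hbad.exists
    exact hq
  by_cases hzz : z = z'
  · simp only [hzz, sub_self, abs_zero, zero_mul, MeasureTheory.integral_zero, norm_zero]
    rw [Real.zero_rpow hs0.ne', mul_zero]
  · set a : ℂ := w + z with hadef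
    set b : ℂ := w + z' with hbdef
    set d : ℝ := ‖z - z'‖ with hddef
    have hd0 : 0 < d := by
      rw [hddef]
      exact norm_pos_iff.mpr (sub_ne_zero.mpr hzz)
    have hab : a - b = z - z' := by rw [hadef, hbdef]; ring
    -- a.e. nonvanishing
    have hae : ∀ c : ℂ, ∀ᵐ q : ℝ, (q : ℂ) ≠ c := by
      intro c
      rw [ae_iff]
      push_neg
      refine measure_mono_null ?_ (measure_singleton (c.re))
      intro q hq
      simp only [Set.mem_setOf_eq, not_not] at hq
      simp [← hq]
    obtain ⟨hIa, hEa⟩ := fm_moment hK hνmeas hνnonneg hνsupp hνbd hCν hs0 hs1 a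
    obtain ⟨hIb, hEb⟩ := fm_moment hK hνmeas hνnonneg hνsupp hνbd hCν hs0 hs1 b
    set Ga : ℝ → ℝ := fun q => (‖a - (q:ℂ)‖) ^ (-(2*s)) * ν q with hGa
    set Gb : ℝ → ℝ := fun q => (‖b - (q:ℂ)‖) ^ (-(2*s)) * ν q with hGb
    have hgint : Integrable (fun q : ℝ => d ^ s / 2 * (Ga q + Gb q)) := ((hIa.add hIb).const_mul _)
    have hmono : (∫ q : ℝ, |(‖a - (q : ℂ)‖) ^ (-s)
          - (‖b - (q : ℂ)‖) ^ (-s)| * ν q)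
        ≤ ∫ q : ℝ, d ^ s / 2 * (Ga q + Gb q) := by
      apply integral_mono_of_nonneg
      · exact ae_of_all _ fun q => mul_nonneg (abs_nonneg _) (hνnonneg q)
      · exact hgint
      · filter_upwards [hae a, hae b] with q hqa hqb
        have hxa : 0 < ‖a - (q:ℂ)‖ :=
          norm_pos_iff.mpr (sub_ne_zero.mpr (Ne.symm hqa))
        have hxb : 0 < ‖b - (q:ℂ)‖ :=
          norm_pos_iff.mpr (sub_ne_zero.mpr (Ne.symm hqb))
        have hdist : |‖a - (q:ℂ)‖ - ‖b - (q:ℂ)‖| ≤ d := by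
          have h1 := abs_norm_sub_norm_le (a - (q:ℂ)) (b - (q:ℂ))
          have h2 : (a - (q:ℂ)) - (b - (q:ℂ)) = z - z' := by rw [hadef, hbdef]; ring
          rw [h2] at h1
          exact h1
        have hp := fm_pointwise hs0 hs1 hxa hxb hdist
        calc |(‖a - (q : ℂ)‖) ^ (-s) - (‖b - (q : ℂ)‖) ^ (-s)| * ν q
            ≤ (d ^ s * (((‖a - (q:ℂ)‖) ^ (-(2*s))
                + (‖b - (q:ℂ)‖) ^ (-(2*s))) / 2)) * ν q :=
              mul_le_mul_of_nonneg_right hp (hνnonneg q)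
          _ = d ^ s / 2 * (Ga q + Gb q) := by rw [hGa, hGb]; ring
    have hsum : ∫ q : ℝ, d ^ s / 2 * (Ga q + Gb q)
        = d ^ s / 2 * ((∫ q : ℝ, Ga q) + ∫ q : ℝ, Gb q) := by
      rw [MeasureTheory.integral_const_mul, integral_add hIa hIb]
    have hds : (0:ℝ) ≤ d ^ s := Real.rpow_nonneg hd0.le s
    calc (∫ q : ℝ, |(‖a - (q : ℂ)‖) ^ (-s)
            - (‖b - (q : ℂ)‖) ^ (-s)| * ν q)
        ≤ d ^ s / 2 * ((∫ q : ℝ, Ga q) + ∫ q : ℝ, Gb q) := hsum ▸ hmono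
      _ ≤ d ^ s / 2 * ((Cν * (2 * K ^ (1 - 2*s) / (1 - 2*s)))
            + (Cν * (2 * K ^ (1 - 2*s) / (1 - 2*s)))) := by
          apply mul_le_mul_of_nonneg_left (add_le_add hEa hEb) (by positivity)
      _ = (2 * Cν * K ^ (1 - 2 * s) / (1 - 2 * s)) * d ^ s := by ring
end

section
/- Let κ ≥ 0, z ∈ ℂ with Im z ≥ 0 and s ∈ (0, 1). Then for every bounded Borel function f on the closed upper half-plane and every w ∈ ℂ with Im w ≥ 0: |(T_{κ,z,s} f)(w)| ≤ (4 · 2^{1−s/2} ‖ν‖_∞ K^{1−s} / (1 − s)) · sup |f|. -/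
open MeasureTheory Complex


open MeasureTheory Set intervalIntegral

lemma aux_subadd {p : ℝ} (hp0 : 0 ≤ p) (hp1 : p ≤ 1) {x y : ℝ} (hx : 0 ≤ x) (hy : 0 ≤ y) :
    (x + y) ^ p ≤ x ^ p + y ^ p := by
  have h := NNReal.rpow_add_le_add_rpow x.toNNReal y.toNNReal hp0 hp1
  have h' := NNReal.coe_le_coe.2 h
  push_cast at h'
  rwa [Real.coe_toNNReal _ hx, Real.coe_toNNReal _ hy] at h'

lemma aux_concave {p : ℝ} (hp0 : 0 < p) (hp1 : p < 1) {x y : ℝ} (hx : 0 ≤ x) (hy : 0 ≤ y) :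
    x ^ p + y ^ p ≤ 2 * ((x + y) / 2) ^ p := by
  have h := (Real.strictConcaveOn_rpow hp0 hp1).concaveOn.2 (Set.mem_Ici.2 hx)
    (Set.mem_Ici.2 hy) (by norm_num : (0:ℝ) ≤ 1/2) (by norm_num : (0:ℝ) ≤ 1/2) (by norm_num)
  simp only [smul_eq_mul] at h
  rw [show (1:ℝ)/2 * x + 1/2 * y = (x + y) / 2 by ring] at h
  linarith

lemma aux_absRpowII {s : ℝ} (hs1 : s < 1) (a b : ℝ) :
    IntervalIntegrable (fun t : ℝ => |t| ^ (-s)) volume a b := by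
  have h : (-1 : ℝ) < -s := by linarith
  have base : ∀ c : ℝ, 0 ≤ c → IntervalIntegrable (fun t : ℝ => |t| ^ (-s)) volume 0 c := by
    intro c hc
    apply (intervalIntegrable_rpow' (a := 0) (b := c) h).congr_ae
    filter_upwards [ae_restrict_mem measurableSet_uIoc] with t ht
    rw [Set.uIoc_of_le hc] at ht
    rw [_root_.abs_of_nonneg ht.1.le]
  have base' : ∀ c : ℝ, IntervalIntegrable (fun t : ℝ => |t| ^ (-s)) volume 0 c := by
    intro c
    rcases le_total 0 c with hc | hc
    · exact base c hc
    · have h2 := (IntervalIntegrable.iff_comp_neg (f := fun t : ℝ => |t| ^ (-s))).mp (base (-c) (by linarith))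
      simp only [abs_neg, neg_zero, neg_neg] at h2
      exact h2
  exact (base' a).symm.trans (base' b)

lemma aux_val {s : ℝ} (hs1 : s < 1) {a b : ℝ} (ha : 0 ≤ a) (hab : a ≤ b) :
    ∫ t in a..b, |t| ^ (-s) = (b ^ (1 - s) - a ^ (1 - s)) / (1 - s) := by
  have h : (-1 : ℝ) < -s := by linarith
  have e : ∫ t in a..b, |t| ^ (-s) = ∫ t in a..b, t ^ (-s) := by
    apply intervalIntegral.integral_congr
    intro t ht
    rw [Set.uIcc_of_le hab] at ht
    show |t| ^ (-s) = t ^ (-s)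
    rw [_root_.abs_of_nonneg (ha.trans ht.1)]
  rw [e, integral_rpow (Or.inl h), show -s + 1 = 1 - s by ring]

lemma aux_main {s : ℝ} (hs0 : 0 < s) (hs1 : s < 1) : ∀ {a b : ℝ}, a ≤ b →
    ∫ t in a..b, |t| ^ (-s) ≤ 2 * ((b - a) / 2) ^ (1 - s) / (1 - s) := by
  have hp0 : (0:ℝ) < 1 - s := by linarith
  have key : ∀ {a b : ℝ}, 0 ≤ a → a ≤ b →
      ∫ t in a..b, |t| ^ (-s) ≤ 2 * ((b - a) / 2) ^ (1 - s) / (1 - s) := by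
    intro a b ha hab
    rw [aux_val hs1 ha hab]
    rw [div_le_div_iff_of_pos_right hp0]
    have h1 : b ^ (1-s) ≤ a ^ (1-s) + (b - a) ^ (1-s) := by
      have h := aux_subadd hp0.le (by linarith) ha (by linarith : (0:ℝ) ≤ b - a)
      rwa [add_sub_cancel] at h
    have h2 : (b - a) ^ (1-s) ≤ 2 * ((b-a)/2) ^ (1-s) := by
      have e : b - a = (b-a)/2 + (b-a)/2 := by ring
      calc (b-a)^(1-s) = ((b-a)/2 + (b-a)/2)^(1-s) := by rw [← e]
        _ ≤ ((b-a)/2)^(1-s) + ((b-a)/2)^(1-s) :=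
            aux_subadd hp0.le (by linarith) (by linarith) (by linarith)
        _ = 2 * ((b-a)/2)^(1-s) := by ring
    linarith
  intro a b hab
  rcases le_total 0 a with ha | ha
  · exact key ha hab
  rcases le_total b 0 with hb | hb
  · have e := intervalIntegral.integral_comp_neg (a := a) (b := b) (fun t => |t| ^ (-s))
    simp only [abs_neg] at e
    rw [e]
    have h := key (by linarith : (0:ℝ) ≤ -b) (by linarith : -b ≤ -a)
    rwa [show -a - -b = b - a by ring] at h
  · -- a ≤ 0 ≤ b
    rw [← intervalIntegral.integral_add_adjacent_intervals
      (aux_absRpowII hs1 a 0) (aux_absRpowII hs1 0 b)]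
    have e1 : ∫ t in a..(0:ℝ), |t| ^ (-s) = (-a) ^ (1-s) / (1-s) := by
      have e := intervalIntegral.integral_comp_neg (a := a) (b := (0:ℝ)) (fun t => |t| ^ (-s))
      simp only [abs_neg, neg_zero] at e
      rw [e, aux_val hs1 le_rfl (by linarith), Real.zero_rpow (by linarith : 1 - s ≠ 0)]
      ring
    have e2 : ∫ t in (0:ℝ)..b, |t| ^ (-s) = b ^ (1-s) / (1-s) := by
      rw [aux_val hs1 le_rfl hb, Real.zero_rpow (by linarith : 1 - s ≠ 0)]
      ring
    rw [e1, e2]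
    have h := aux_concave hp0 (by linarith) (by linarith : (0:ℝ) ≤ -a) hb
    rw [show -a + b = b - a by ring] at h
    rw [← add_div, div_le_div_iff_of_pos_right hp0]
    linarith

lemma aux_translated {s : ℝ} (hs0 : 0 < s) (hs1 : s < 1) {K : ℝ} (hK : 0 < K) (α : ℝ) :
    ∫ r in (-K)..K, |α - r / Real.sqrt 2| ^ (-s)
      ≤ Real.sqrt 2 * (2 * (K / Real.sqrt 2) ^ (1 - s) / (1 - s)) := by
  have h2 : (0:ℝ) < Real.sqrt 2 := by positivity
  have e1 := intervalIntegral.integral_comp_div (a := -K) (b := K)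
      (f := fun u => |α - u| ^ (-s)) (c := Real.sqrt 2) (ne_of_gt h2)
  have e2 := intervalIntegral.integral_comp_sub_left (a := -K / Real.sqrt 2)
      (b := K / Real.sqrt 2) (fun t => |t| ^ (-s)) α
  rw [show (fun r : ℝ => |α - r / Real.sqrt 2| ^ (-s))
      = fun r : ℝ => (fun u => |α - u| ^ (-s)) (r / Real.sqrt 2) from rfl, e1, e2,
    smul_eq_mul]
  have hle : α - K / Real.sqrt 2 ≤ α - -K / Real.sqrt 2 := by
    have : 0 < K / Real.sqrt 2 := by positivity
    rw [neg_div]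
    linarith
  have h := aux_main hs0 hs1 hle
  rw [show α - -K / Real.sqrt 2 - (α - K / Real.sqrt 2) = 2 * (K / Real.sqrt 2) by ring,
    show 2 * (K / Real.sqrt 2) / 2 = K / Real.sqrt 2 by ring] at h
  exact mul_le_mul_of_nonneg_left h h2.le

/-- `φ⁺_{z,q}(w) = ½(−1/(w+(z−q₀)/√2) + (−1/(w+(z−q₁)/√2)))`; terms with vanishing
denominator are zero (automatic, since division by zero is zero). -/
noncomputable def phiPlus (z : ℂ) (q : ℝ × ℝ) (w : ℂ) : ℂ :=
  (1 / 2) * (-1 / (w + (z - (q.1 : ℂ)) / (Real.sqrt 2 : ℂ))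
    + -1 / (w + (z - (q.2 : ℂ)) / (Real.sqrt 2 : ℂ)))

/-- `φ⁻_{z,q}(w) = ½(−1/(w+(z−q₀)/√2) − (−1/(w+(z−q₁)/√2)))`. -/
noncomputable def phiMinus (z : ℂ) (q : ℝ × ℝ) (w : ℂ) : ℂ :=
  (1 / 2) * (-1 / (w + (z - (q.1 : ℂ)) / (Real.sqrt 2 : ℂ))
    - -1 / (w + (z - (q.2 : ℂ)) / (Real.sqrt 2 : ℂ)))

/-- The transfer operator `T_{κ,z,s}` acting on bounded Borel functions on the closed upper
half-plane. -/
noncomputable def transferOpC (ν : ℝ → ℝ) (σ : Measure (ℝ × ℝ)) (κ : ℝ) (z : ℂ) (s : ℝ)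
    (f : ℂ → ℂ) (w : ℂ) : ℂ :=
  ∫ p : ℝ × ℝ, (∫ r : ℝ, f (phiPlus z (r + κ * p.1, r + κ * p.2) w) *
    ((((‖phiPlus z (r + κ * p.1, r + κ * p.2) w‖) ^ s
      + (‖phiMinus z (r + κ * p.1, r + κ * p.2) w‖) ^ s) * ν r : ℝ) : ℂ)) ∂σ

lemma aux_im_inv (d : ℂ) (hd : 0 ≤ d.im) : 0 ≤ (-1 / d).im := by
  rcases eq_or_ne d 0 with h | h
  · simp [h]
  · have : (-1 / d).im = d.im / Complex.normSq d := by
      rw [div_eq_mul_inv, neg_one_mul, Complex.neg_im, Complex.inv_im, neg_div, neg_neg]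
    rw [this]
    exact div_nonneg hd (Complex.normSq_nonneg d)

lemma aux_im_den (z : ℂ) (hz : 0 ≤ z.im) (w : ℂ) (hw : 0 ≤ w.im) (x : ℝ) :
    0 ≤ (w + (z - (x:ℂ)) / (Real.sqrt 2 : ℂ)).im := by
  have h2 : (0:ℝ) < Real.sqrt 2 := by positivity
  have : (w + (z - (x:ℂ)) / (Real.sqrt 2 : ℂ)).im = w.im + z.im / Real.sqrt 2 := by
    simp [Complex.add_im, Complex.div_ofReal_im, Complex.sub_im, Complex.ofReal_im]
  rw [this]
  positivity

lemma aux_im_phiPlus (z : ℂ) (hz : 0 ≤ z.im) (q : ℝ × ℝ) (w : ℂ) (hw : 0 ≤ w.im) :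
    0 ≤ (phiPlus z q w).im := by
  have h1 := aux_im_inv _ (aux_im_den z hz w hw q.1)
  have h2 := aux_im_inv _ (aux_im_den z hz w hw q.2)
  rw [phiPlus]
  have e : ((1:ℂ)/2).im = 0 := by norm_num
  have e2 : ((1:ℂ)/2).re = 1/2 := by norm_num
  rw [Complex.mul_im, Complex.add_im, e, e2]
  nlinarith

lemma aux_re_den (z : ℂ) (w : ℂ) (x : ℝ) :
    (w + (z - (x:ℂ)) / (Real.sqrt 2 : ℂ)).re = w.re + (z.re - x) / Real.sqrt 2 := by
  simp [Complex.add_re, Complex.div_ofReal_re, Complex.sub_re, Complex.ofReal_re]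

lemma aux_phi_bound {s : ℝ} (hs0 : 0 < s) (hs1 : s < 1) (z w : ℂ) (q : ℝ × ℝ)
    (h0 : (w + (z - (q.1:ℂ)) / (Real.sqrt 2 : ℂ)).re ≠ 0)
    (h1 : (w + (z - (q.2:ℂ)) / (Real.sqrt 2 : ℂ)).re ≠ 0) :
    ‖phiPlus z q w‖ ^ s + ‖phiMinus z q w‖ ^ s ≤
      2 ^ (1 - s) * (|(w + (z - (q.1:ℂ)) / (Real.sqrt 2 : ℂ)).re| ^ (-s)
        + |(w + (z - (q.2:ℂ)) / (Real.sqrt 2 : ℂ)).re| ^ (-s)) := by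
  set d0 := w + (z - (q.1:ℂ)) / (Real.sqrt 2 : ℂ) with hd0
  set d1 := w + (z - (q.2:ℂ)) / (Real.sqrt 2 : ℂ) with hd1
  set u := -1 / d0 with hu
  set v := -1 / d1 with hv
  have habs : ∀ (d : ℂ), d.re ≠ 0 → ‖-1 / d‖ ≤ |d.re|⁻¹ := by
    intro d hd
    have hdne : d ≠ 0 := fun h => hd (by simp [h])
    have h1 : ‖-1 / d‖ = (‖d‖)⁻¹ := by
      rw [norm_div]
      simp
    rw [h1]
    have h2 : |d.re| ≤ ‖d‖ := Complex.abs_re_le_norm d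
    have h3 : 0 < |d.re| := abs_pos.2 hd
    exact inv_anti₀ h3 h2
  have hu_le : ‖u‖ ≤ |d0.re|⁻¹ := habs d0 h0
  have hv_le : ‖v‖ ≤ |d1.re|⁻¹ := habs d1 h1
  have hplus : ‖phiPlus z q w‖ ≤ (‖u‖ + ‖v‖) / 2 := by
    rw [phiPlus, ← hd0, ← hd1, ← hu, ← hv, norm_mul]
    have e : ‖(1/2 : ℂ)‖ = 1/2 := by
      rw [norm_div]; simp
    rw [e]
    have := norm_add_le u v
    linarith
  have hminus : ‖phiMinus z q w‖ ≤ (‖u‖ + ‖v‖) / 2 := by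
    rw [phiMinus, ← hd0, ← hd1, ← hu, ← hv, norm_mul]
    have e : ‖(1/2 : ℂ)‖ = 1/2 := by
      rw [norm_div]; simp
    rw [e]
    have e2 : ‖u - v‖ ≤ ‖u‖ + ‖v‖ := by
      rw [sub_eq_add_neg]
      calc ‖u + -v‖ ≤ ‖u‖ + ‖-v‖ := norm_add_le u (-v)
        _ = ‖u‖ + ‖v‖ := by rw [norm_neg]
    linarith
  have hX0 : 0 ≤ (‖u‖ + ‖v‖) / 2 := by positivity
  have h5p := Real.rpow_le_rpow (norm_nonneg _) hplus hs0.le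
  have h5m := Real.rpow_le_rpow (norm_nonneg _) hminus hs0.le
  have h6 : 2 * ((‖u‖ + ‖v‖) / 2) ^ s
      = 2 ^ (1-s) * (‖u‖ + ‖v‖) ^ s := by
    rw [Real.div_rpow (by positivity) (by norm_num : (0:ℝ) ≤ 2),
      Real.rpow_sub (by norm_num : (0:ℝ) < 2), Real.rpow_one]
    have : (2:ℝ) ^ s ≠ 0 := by positivity
    field_simp
  have h7 : (‖u‖ + ‖v‖) ^ s
      ≤ ‖u‖ ^ s + ‖v‖ ^ s :=
    aux_subadd hs0.le hs1.le (norm_nonneg _) (norm_nonneg _)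
  have h8 : ‖u‖ ^ s ≤ |d0.re| ^ (-s) := by
    rw [Real.rpow_neg (abs_nonneg _), ← Real.inv_rpow (abs_nonneg _)]
    exact Real.rpow_le_rpow (norm_nonneg _) hu_le hs0.le
  have h9 : ‖v‖ ^ s ≤ |d1.re| ^ (-s) := by
    rw [Real.rpow_neg (abs_nonneg _), ← Real.inv_rpow (abs_nonneg _)]
    exact Real.rpow_le_rpow (norm_nonneg _) hv_le hs0.le
  calc ‖phiPlus z q w‖ ^ s + ‖phiMinus z q w‖ ^ s
      ≤ 2 * ((‖u‖ + ‖v‖) / 2) ^ s := by linarith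
    _ = 2 ^ (1-s) * (‖u‖ + ‖v‖) ^ s := h6
    _ ≤ 2 ^ (1-s) * (|d0.re| ^ (-s) + |d1.re| ^ (-s)) := by
        apply mul_le_mul_of_nonneg_left _ (by positivity)
        linarith


/-- Lemma 3.4(i) of the paper: uniform boundedness of the transfer operator,
`|(T_{κ,z,s} f)(w)| ≤ (4 · 2^{1−s/2} ‖ν‖_∞ K^{1−s}/(1−s)) · sup |f|`. -/
theorem transferOpC_bounded (K : ℝ) (hK : 0 < K) (ν : ℝ → ℝ)
    (hνmeas : Measurable ν) (hνnonneg : ∀ q, 0 ≤ ν q)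
    (hνsupp : ∀ q, q ∉ Set.Icc (-K) K → ν q = 0)
    (hνprob : ∫ q : ℝ, ν q = 1)
    (Cν : ℝ) (hνbd : ∀ᵐ q : ℝ, ν q ≤ Cν)
    (σ : Measure (ℝ × ℝ)) [IsProbabilityMeasure σ]
    (hσsupp : σ {p : ℝ × ℝ | ¬(|p.1| ≤ 1 ∧ |p.2| ≤ 1)} = 0)
    (κ : ℝ) (hκ : 0 ≤ κ) (z : ℂ) (hz : 0 ≤ z.im) (s : ℝ) (hs0 : 0 < s) (hs1 : s < 1)
    (f : ℂ → ℂ) (hfmeas : Measurable f) (B : ℝ)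
    (hfB : ∀ w : ℂ, 0 ≤ w.im → ‖f w‖ ≤ B) :
    ∀ w : ℂ, 0 ≤ w.im →
      ‖transferOpC ν σ κ z s f w‖ ≤
        (4 * (2 : ℝ) ^ (1 - s / 2) * Cν * K ^ (1 - s) / (1 - s)) * B := by
  intro w hw
  have hp0 : (0:ℝ) < 1 - s := by linarith
  have hB : 0 ≤ B := le_trans (norm_nonneg (f Complex.I)) (hfB Complex.I (by simp))
  have hCν : 0 ≤ Cν := by
    obtain ⟨q, hq1, hq2⟩ := (hνbd.and (Filter.Eventually.of_forall hνnonneg)).exists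
    linarith
  have h2 : (0:ℝ) < Real.sqrt 2 := by positivity
  set D : ℝ := Real.sqrt 2 * (2 * (K / Real.sqrt 2) ^ (1 - s) / (1 - s)) with hD
  have hD0 : 0 ≤ D := by positivity
  set c0 : ℝ := B * (2 ^ (1-s) * Cν) with hc0
  have hc00 : 0 ≤ c0 := by
    have : (0:ℝ) ≤ 2 ^ (1-s) := le_of_lt (Real.rpow_pos_of_pos (by norm_num) _)
    exact mul_nonneg hB (mul_nonneg this hCν)
  set M : ℝ := c0 * (D + D) with hM
  -- the constant identity
  have e2 : (K / Real.sqrt 2) ^ (1 - s) = K ^ (1-s) / 2 ^ ((1-s)/2) := by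
    rw [Real.div_rpow hK.le (Real.sqrt_nonneg 2), Real.sqrt_eq_rpow,
      ← Real.rpow_mul (by norm_num : (0:ℝ) ≤ 2)]
    rw [show (1:ℝ)/2 * (1-s) = (1-s)/2 by ring]
  have epow : (2:ℝ)^(1-s) * (2:ℝ)^((1:ℝ)/2) = (2:ℝ)^(1 - s/2) * (2:ℝ)^((1-s)/2) := by
    rw [← Real.rpow_add (by norm_num : (0:ℝ) < 2), ← Real.rpow_add (by norm_num : (0:ℝ) < 2)]
    ring_nf
  have key2 : (2:ℝ)^((1-s)/2) * (K^(1-s) / 2^((1-s)/2)) = K^(1-s) := by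
    have hPne : (2:ℝ) ^ ((1-s)/2) ≠ 0 := by positivity
    field_simp
  have hM_eq : M = 4 * (2:ℝ) ^ (1 - s/2) * Cν * K ^ (1-s) / (1-s) * B := by
    calc M = (2^(1-s) * 2^((1:ℝ)/2)) * (4 * Cν * (K^(1-s) / 2^((1-s)/2)) / (1-s) * B) := by
          rw [hM, hc0, hD, e2, Real.sqrt_eq_rpow]; ring
      _ = (2^(1 - s/2) * 2^((1-s)/2)) * (4 * Cν * (K^(1-s) / 2^((1-s)/2)) / (1-s) * B) := by
          rw [epow]
      _ = 2^(1 - s/2) * ((2:ℝ)^((1-s)/2) * (K^(1-s) / 2^((1-s)/2))) * (4 * Cν / (1-s) * B) := by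
          ring
      _ = 2^(1 - s/2) * K^(1-s) * (4 * Cν / (1-s) * B) := by rw [key2]
      _ = 4 * (2:ℝ) ^ (1 - s/2) * Cν * K ^ (1-s) / (1-s) * B := by ring
  -- interval integrability of the dominating kernels
  have hii : ∀ α : ℝ, IntervalIntegrable (fun r : ℝ => |α - r / Real.sqrt 2| ^ (-s))
      volume (-K) K := by
    intro α
    have hc : (Real.sqrt 2)⁻¹ ≠ 0 := by positivity
    have base := aux_absRpowII hs1 ((α - (α + K * (Real.sqrt 2)⁻¹)) * Real.sqrt 2)
      ((α - (α - K * (Real.sqrt 2)⁻¹)) * Real.sqrt 2)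
    have h1 := (aux_absRpowII hs1 (α + K * (Real.sqrt 2)⁻¹)
      (α - K * (Real.sqrt 2)⁻¹)).comp_sub_left α
    have h2' := h1.comp_mul_left (c := (Real.sqrt 2)⁻¹)
    have e0 : (α - (α + K * (Real.sqrt 2)⁻¹)) / (Real.sqrt 2)⁻¹ = -K := by
      field_simp
      ring
    have e1 : (α - (α - K * (Real.sqrt 2)⁻¹)) / (Real.sqrt 2)⁻¹ = K := by
      field_simp
      ring
    rw [e0, e1] at h2'
    apply h2'.congr_ae
    apply Filter.EventuallyEq.restrict
    apply Filter.Eventually.of_forall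
    intro x
    show |α - (Real.sqrt 2)⁻¹ * x| ^ (-s) = |α - x / Real.sqrt 2| ^ (-s)
    rw [div_eq_mul_inv, mul_comm x]
  -- the main per-p bound
  have key : ∀ p : ℝ × ℝ,
      ‖∫ r : ℝ, f (phiPlus z (r + κ * p.1, r + κ * p.2) w) *
        ((((‖phiPlus z (r + κ * p.1, r + κ * p.2) w‖) ^ s
          + (‖phiMinus z (r + κ * p.1, r + κ * p.2) w‖) ^ s) * ν r : ℝ) : ℂ)‖
        ≤ M := by
    intro p
    set α₀ : ℝ := w.re + (z.re - κ * p.1) / Real.sqrt 2 with hα₀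
    set α₁ : ℝ := w.re + (z.re - κ * p.2) / Real.sqrt 2 with hα₁
    have hre0 : ∀ r : ℝ, (w + (z - ((r + κ * p.1 : ℝ):ℂ)) / (Real.sqrt 2 : ℂ)).re
        = α₀ - r / Real.sqrt 2 := by
      intro r; rw [aux_re_den, hα₀]; field_simp; ring
    have hre1 : ∀ r : ℝ, (w + (z - ((r + κ * p.2 : ℝ):ℂ)) / (Real.sqrt 2 : ℂ)).re
        = α₁ - r / Real.sqrt 2 := by
      intro r; rw [aux_re_den, hα₁]; field_simp; ring
    set g : ℝ → ℝ := Set.indicator (Set.Icc (-K) K)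
      (fun r => c0 * (|α₀ - r / Real.sqrt 2| ^ (-s) + |α₁ - r / Real.sqrt 2| ^ (-s))) with hg
    have hgint : Integrable g := by
      rw [hg, integrable_indicator_iff measurableSet_Icc]
      apply Integrable.const_mul
      exact ((intervalIntegrable_iff_integrableOn_Icc_of_le (by linarith : -K ≤ K)).mp
        (hii α₀)).add ((intervalIntegrable_iff_integrableOn_Icc_of_le
        (by linarith : -K ≤ K)).mp (hii α₁))
    have hnull : ∀ α : ℝ, ∀ᵐ r : ℝ, α - r / Real.sqrt 2 ≠ 0 := by
      intro α
      refine ae_iff.mpr (measure_mono_null ?_ (measure_singleton (α * Real.sqrt 2)))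
      intro r hr
      simp only [Set.mem_setOf_eq, not_not] at hr
      have h2ne : Real.sqrt 2 ≠ 0 := ne_of_gt h2
      have : r = α * Real.sqrt 2 := by
        field_simp at hr
        linarith
      simp [this]
    have hae : ∀ᵐ r : ℝ, ‖f (phiPlus z (r + κ * p.1, r + κ * p.2) w) *
        ((((‖phiPlus z (r + κ * p.1, r + κ * p.2) w‖) ^ s
          + (‖phiMinus z (r + κ * p.1, r + κ * p.2) w‖) ^ s) * ν r : ℝ) : ℂ)‖
        ≤ g r := by
      filter_upwards [hνbd, hnull α₀, hnull α₁] with r hν hn0 hn1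
      set q : ℝ × ℝ := (r + κ * p.1, r + κ * p.2) with hq
      set X : ℝ := ‖phiPlus z q w‖ ^ s + ‖phiMinus z q w‖ ^ s with hX
      have hX0 : 0 ≤ X := by positivity
      have hnorm : ‖f (phiPlus z q w) * ((X * ν r : ℝ) : ℂ)‖
          = ‖f (phiPlus z q w)‖ * (X * ν r) := by
        rw [norm_mul, Complex.norm_real, Real.norm_eq_abs,
          _root_.abs_of_nonneg (mul_nonneg hX0 (hνnonneg r))]
      by_cases hrK : r ∈ Set.Icc (-K) K
      · have hb := aux_phi_bound hs0 hs1 z w q (by rw [hre0 r] at *; exact hn0)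
          (by rw [hre1 r] at *; exact hn1)
        rw [hre0 r, hre1 r] at hb
        have hfb : ‖f (phiPlus z q w)‖ ≤ B :=
          hfB _ (aux_im_phiPlus z hz q w hw)
        have hY0 : (0:ℝ) ≤ 2 ^ (1-s) * (|α₀ - r / Real.sqrt 2| ^ (-s)
            + |α₁ - r / Real.sqrt 2| ^ (-s)) := by positivity
        have hgr : g r = c0 * (|α₀ - r / Real.sqrt 2| ^ (-s)
            + |α₁ - r / Real.sqrt 2| ^ (-s)) := by
          rw [hg, Set.indicator_of_mem hrK]
        rw [hnorm, hgr, hc0]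
        calc ‖f (phiPlus z q w)‖ * (X * ν r)
            ≤ B * ((2 ^ (1-s) * (|α₀ - r / Real.sqrt 2| ^ (-s)
              + |α₁ - r / Real.sqrt 2| ^ (-s))) * Cν) := by
              apply mul_le_mul hfb ?_ (mul_nonneg hX0 (hνnonneg r)) hB
              exact mul_le_mul hb hν (hνnonneg r) hY0
          _ = B * (2 ^ (1-s) * Cν) * (|α₀ - r / Real.sqrt 2| ^ (-s)
              + |α₁ - r / Real.sqrt 2| ^ (-s)) := by ring
      · rw [hnorm, hνsupp r hrK, mul_zero, mul_zero]
        rw [hg, Set.indicator_of_notMem hrK]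
    calc ‖∫ r : ℝ, f (phiPlus z (r + κ * p.1, r + κ * p.2) w) *
        ((((‖phiPlus z (r + κ * p.1, r + κ * p.2) w‖) ^ s
          + (‖phiMinus z (r + κ * p.1, r + κ * p.2) w‖) ^ s) * ν r : ℝ) : ℂ)‖
        ≤ ∫ r : ℝ, ‖f (phiPlus z (r + κ * p.1, r + κ * p.2) w) *
          ((((‖phiPlus z (r + κ * p.1, r + κ * p.2) w‖) ^ s
            + (‖phiMinus z (r + κ * p.1, r + κ * p.2) w‖) ^ s) * ν r : ℝ) : ℂ)‖ :=
          norm_integral_le_integral_norm _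
      _ ≤ ∫ r : ℝ, g r :=
          integral_mono_of_nonneg (Filter.Eventually.of_forall fun r => norm_nonneg _) hgint hae
      _ = c0 * ((∫ r in (-K)..K, |α₀ - r / Real.sqrt 2| ^ (-s))
          + ∫ r in (-K)..K, |α₁ - r / Real.sqrt 2| ^ (-s)) := by
          rw [hg, MeasureTheory.integral_indicator measurableSet_Icc, integral_Icc_eq_integral_Ioc,
            ← intervalIntegral.integral_of_le (by linarith : -K ≤ K),
            intervalIntegral.integral_const_mul,
            intervalIntegral.integral_add (hii α₀) (hii α₁)]
      _ ≤ c0 * (D + D) := by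
          apply mul_le_mul_of_nonneg_left _ hc00
          exact add_le_add (aux_translated hs0 hs1 hK α₀) (aux_translated hs0 hs1 hK α₁)
      _ = M := hM.symm
  calc ‖transferOpC ν σ κ z s f w‖
      ≤ M * (σ Set.univ).toReal := by
        rw [transferOpC]
        exact norm_integral_le_of_norm_le_const (Filter.Eventually.of_forall key)
    _ = M := by simp
    _ = 4 * (2:ℝ) ^ (1 - s/2) * Cν * K ^ (1-s) / (1-s) * B := hM_eq
    _ = (4 * (2 : ℝ) ^ (1 - s / 2) * Cν * K ^ (1 - s) / (1 - s)) * B := by ring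
end

section
/- Let K ∈ (0, ∞), s ∈ (0, 1) and κ > 0. Let ν : ℝ → [0, ∞) be a bounded measurable probability density vanishing outside [−K, K] with essential supremum ‖ν‖_∞, and let τ : ℝ → [0, ∞) be a bounded measurable probability density vanishing outside [−1, 1] with essential supremum ‖τ‖_∞. Then for every w ∈ ℝ: ∫_ℝ ∫_ℝ |w − r − κ p|^{−s} ν(r) τ(p) dr dp ≤ 4 K ‖ν‖_∞ ‖τ‖_∞ κ^{−s} / (1 − s). -/
open MeasureTheory

lemma my_rpow_subadd {x y p : ℝ} (hx : 0 ≤ x) (hy : 0 ≤ y) (hp : 0 ≤ p) (hp1 : p ≤ 1) :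
    (x + y) ^ p ≤ x ^ p + y ^ p := by
  have h := NNReal.rpow_add_le_add_rpow (Real.toNNReal x) (Real.toNNReal y) hp hp1
  have h2 := NNReal.coe_le_coe.2 h
  rw [← Real.toNNReal_add hx hy] at h2
  simpa [NNReal.coe_rpow, Real.coe_toNNReal _ hx, Real.coe_toNNReal _ hy,
    Real.coe_toNNReal _ (add_nonneg hx hy)] using h2

lemma my_rpow_concave {x y p : ℝ} (hx : 0 ≤ x) (hy : 0 ≤ y) (hp : 0 ≤ p) (hp1 : p ≤ 1) :
    x ^ p + y ^ p ≤ 2 * ((x + y) / 2) ^ p := by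
  have h := (Real.concaveOn_rpow hp hp1).2 (Set.mem_Ici.2 hx) (Set.mem_Ici.2 hy)
    (by norm_num : (0:ℝ) ≤ 1/2) (by norm_num : (0:ℝ) ≤ 1/2) (by norm_num)
  simp only [smul_eq_mul] at h
  have : (1/2 : ℝ) * x + (1/2) * y = (x + y)/2 := by ring
  rw [this] at h
  linarith

lemma my_abs_rpow_intInt {s : ℝ} (hs1 : s < 1) (a b : ℝ) :
    IntervalIntegrable (fun y : ℝ => |y| ^ (-s)) volume a b := by
  have h0 : ∀ b : ℝ, IntervalIntegrable (fun y : ℝ => |y| ^ (-s)) volume 0 b := by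
    intro b
    rcases le_total 0 b with hb | hb
    · rw [intervalIntegrable_iff]
      have h := intervalIntegral.intervalIntegrable_rpow' (show (-1:ℝ) < -s by linarith)
        (a := 0) (b := b)
      rw [intervalIntegrable_iff] at h
      apply h.congr
      filter_upwards [ae_restrict_mem measurableSet_uIoc] with y hy
      rw [Set.uIoc_of_le hb] at hy
      rw [abs_of_pos hy.1]
    · have h := intervalIntegral.intervalIntegrable_rpow' (show (-1:ℝ) < -s by linarith)
        (a := 0) (b := -b)
      have h2 := (IntervalIntegrable.iff_comp_neg (by simp)).mp h
      simp only [neg_zero, neg_neg] at h2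
      rw [intervalIntegrable_iff] at h2 ⊢
      apply h2.congr
      filter_upwards [ae_restrict_mem measurableSet_uIoc] with y hy
      rw [Set.uIoc_of_ge hb] at hy
      rw [abs_of_nonpos hy.2]
  exact ((h0 a).symm.trans (h0 b))

lemma my_H0 {s : ℝ} (hs0 : 0 < s) (hs1 : s < 1) {b : ℝ} (hb : 0 ≤ b) :
    ∫ y in (0:ℝ)..b, |y| ^ (-s) = b ^ (1 - s) / (1 - s) := by
  have h1 : ∫ y in (0:ℝ)..b, |y| ^ (-s) = ∫ y in (0:ℝ)..b, y ^ (-s) := by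
    apply intervalIntegral.integral_congr
    intro y hy
    rw [Set.uIcc_of_le hb] at hy
    show |y| ^ (-s) = y ^ (-s)
    rw [abs_of_nonneg hy.1]
  rw [h1, integral_rpow (Or.inl (by linarith))]
  rw [Real.zero_rpow (by intro h; linarith [h] : -s + 1 ≠ 0)]
  rw [show -s + 1 = 1 - s by ring]
  ring

lemma my_key {s κ : ℝ} (hs0 : 0 < s) (hs1 : s < 1) (hκ : 0 < κ) (c : ℝ) :
    ∫ y in (c - κ)..(c + κ), |y| ^ (-s) ≤ 2 * κ ^ (1 - s) / (1 - s) := by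
  have hp0 : (0:ℝ) < 1 - s := by linarith
  have hp1 : (1:ℝ) - s ≤ 1 := by linarith
  have main : ∀ c : ℝ, 0 ≤ c → ∫ y in (c - κ)..(c + κ), |y| ^ (-s) ≤ 2 * κ ^ (1 - s) / (1 - s) := by
    intro c hc
    rcases le_total κ c with hcκ | hcκ
    · -- interval ⊆ [0, ∞)
      have h1 : ∫ y in (c - κ)..(c + κ), |y| ^ (-s) = ∫ y in (c - κ)..(c + κ), y ^ (-s) := by
        apply intervalIntegral.integral_congr
        intro y hy
        rw [Set.uIcc_of_le (by linarith)] at hy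
        show |y| ^ (-s) = y ^ (-s)
        rw [abs_of_nonneg (by linarith [hy.1])]
      rw [h1, integral_rpow (Or.inl (by linarith))]
      rw [show -s + 1 = 1 - s by ring]
      have hsub : (c + κ) ^ (1 - s) ≤ (c - κ) ^ (1 - s) + (2 * κ) ^ (1 - s) := by
        have := my_rpow_subadd (show (0:ℝ) ≤ c - κ by linarith) (show (0:ℝ) ≤ 2 * κ by linarith)
          hp0.le hp1
        rw [show c - κ + 2 * κ = c + κ by ring] at this
        exact this
      have h2κ : (2 * κ) ^ (1 - s) ≤ 2 * κ ^ (1 - s) := by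
        rw [Real.mul_rpow (by norm_num) hκ.le]
        have : (2:ℝ) ^ (1 - s) ≤ 2 ^ (1:ℝ) :=
          Real.rpow_le_rpow_of_exponent_le (by norm_num) hp1
        rw [Real.rpow_one] at this
        nlinarith [Real.rpow_nonneg hκ.le (1 - s)]
      rw [div_le_div_iff₀ hp0 hp0]
      nlinarith [hsub, h2κ]
    · -- 0 ≤ c ≤ κ : split at 0
      have hint1 := my_abs_rpow_intInt hs1 (c - κ) 0
      have hint2 := my_abs_rpow_intInt hs1 0 (c + κ)
      rw [← intervalIntegral.integral_add_adjacent_intervals hint1 hint2]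
      have hleft : ∫ y in (c - κ)..(0:ℝ), |y| ^ (-s) = (κ - c) ^ (1 - s) / (1 - s) := by
        have h := intervalIntegral.integral_comp_neg (a := -(0:ℝ)) (b := -(c - κ))
          (fun y : ℝ => |y| ^ (-s))
        simp only [neg_neg, abs_neg, neg_zero] at h
        rw [← h, show -(c - κ) = κ - c by ring, my_H0 hs0 hs1 (by linarith : (0:ℝ) ≤ κ - c)]
      rw [hleft, my_H0 hs0 hs1 (by linarith : (0:ℝ) ≤ c + κ)]
      rw [← add_div, div_le_div_iff₀ hp0 hp0]
      have hcon := my_rpow_concave (show (0:ℝ) ≤ κ - c by linarith)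
        (show (0:ℝ) ≤ c + κ by linarith) hp0.le hp1
      rw [show (κ - c + (c + κ)) / 2 = κ by ring] at hcon
      nlinarith [hcon]
  rcases le_total 0 c with hc | hc
  · exact main c hc
  · have h := intervalIntegral.integral_comp_neg (a := -(c + κ)) (b := -(c - κ))
      (fun y : ℝ => |y| ^ (-s))
    simp only [neg_neg, abs_neg] at h
    rw [← h]
    have := main (-c) (by linarith)
    rw [show -c - κ = -(c + κ) by ring, show -c + κ = -(c - κ) by ring] at this
    exact this

lemma my_prob_bound {L : ℝ} (hL : 0 < L) (f : ℝ → ℝ) (hfnn : ∀ q, 0 ≤ f q)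
    (hsupp : ∀ q, q ∉ Set.Icc (-L) L → f q = 0) (hprob : ∫ q : ℝ, f q = 1)
    (C : ℝ) (hbd : ∀ᵐ q : ℝ, f q ≤ C) : 1 ≤ 2 * L * C := by
  have hind : Integrable (Set.indicator (Set.Icc (-L) L) fun _ => C) := by
    rw [integrable_indicator_iff measurableSet_Icc]
    exact integrableOn_const measure_Icc_lt_top.ne
  have h1 : (1:ℝ) ≤ ∫ q : ℝ, (Set.indicator (Set.Icc (-L) L) fun _ => C) q := by
    rw [← hprob]
    apply integral_mono_of_nonneg (Filter.Eventually.of_forall hfnn) hind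
    filter_upwards [hbd] with q hq
    by_cases h : q ∈ Set.Icc (-L) L
    · simpa [Set.indicator_of_mem h] using hq
    · simp [Set.indicator_of_notMem h, hsupp q h]
  rw [integral_indicator_const _ measurableSet_Icc, Real.volume_real_Icc_of_le (by linarith), smul_eq_mul] at h1
  nlinarith [h1]

/-- The large-coupling estimate (Lemma 6.1 of the paper): for bounded probability densities
`ν` (supported in `[−K,K]`) and `τ` (supported in `[−1,1]`), for every real `w`,
`∫∫ |w − r − κp|^{−s} ν(r) τ(p) dr dp ≤ 4 K ‖ν‖_∞ ‖τ‖_∞ κ^{−s}/(1−s)`. -/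
theorem large_coupling_estimate (K : ℝ) (hK : 0 < K) (s : ℝ) (hs0 : 0 < s) (hs1 : s < 1)
    (κ : ℝ) (hκ : 0 < κ) (ν : ℝ → ℝ)
    (hνmeas : Measurable ν) (hνnonneg : ∀ q, 0 ≤ ν q)
    (hνsupp : ∀ q, q ∉ Set.Icc (-K) K → ν q = 0)
    (hνprob : ∫ q : ℝ, ν q = 1)
    (Cν : ℝ) (hνbd : ∀ᵐ q : ℝ, ν q ≤ Cν)
    (τ : ℝ → ℝ) (hτmeas : Measurable τ) (hτnonneg : ∀ p, 0 ≤ τ p)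
    (hτsupp : ∀ p, p ∉ Set.Icc (-1 : ℝ) 1 → τ p = 0)
    (hτprob : ∫ p : ℝ, τ p = 1)
    (Cτ : ℝ) (hτbd : ∀ᵐ p : ℝ, τ p ≤ Cτ) :
    ∀ w : ℝ, (∫ r : ℝ, ∫ p : ℝ, |w - r - κ * p| ^ (-s) * ν r * τ p) ≤
      4 * K * Cν * Cτ * κ ^ (-s) / (1 - s) := by
  intro w
  have hp0 : (0:ℝ) < 1 - s := by linarith
  have hKC : 1 ≤ 2 * K * Cν := my_prob_bound hK ν hνnonneg hνsupp hνprob Cν hνbd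
  have hτC : 1 ≤ 2 * 1 * Cτ := my_prob_bound one_pos τ hτnonneg hτsupp hτprob Cτ hτbd
  have hCτ : 0 ≤ Cτ := by linarith
  set B : ℝ := 2 * Cτ * κ ^ (-s) / (1 - s) with hB
  -- integrability of the affine-composed kernel on [-1,1]
  have hker : ∀ a : ℝ, IntervalIntegrable (fun p : ℝ => |a - κ * p| ^ (-s)) volume (-1) 1 := by
    intro a
    have h1 := (my_abs_rpow_intInt hs1 (a + κ) (a - κ)).comp_sub_left a
    have h2 := h1.comp_mul_left (c := κ)
    have e1 : (a - (a + κ)) / κ = -1 := by field_simp; ring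
    have e2 : (a - (a - κ)) / κ = 1 := by field_simp; ring
    rw [e1, e2] at h2
    exact h2
  -- inner bound
  have hinner : ∀ a : ℝ, (∫ p : ℝ, |a - κ * p| ^ (-s) * τ p) ≤ B := by
    intro a
    set φ : ℝ → ℝ := Set.indicator (Set.Icc (-1 : ℝ) 1) fun p => Cτ * |a - κ * p| ^ (-s) with hφ
    have hφint : Integrable φ := by
      rw [hφ, integrable_indicator_iff measurableSet_Icc]
      have := ((hker a).const_mul Cτ)
      rwa [intervalIntegrable_iff_integrableOn_Icc_of_le (by norm_num)] at this
    have hle : (∫ p : ℝ, |a - κ * p| ^ (-s) * τ p) ≤ ∫ p : ℝ, φ p := by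
      apply integral_mono_of_nonneg ?_ hφint
      · filter_upwards [hτbd] with p hp
        by_cases h : p ∈ Set.Icc (-1 : ℝ) 1
        · rw [hφ, Set.indicator_of_mem h, mul_comm Cτ]
          exact mul_le_mul_of_nonneg_left hp (Real.rpow_nonneg (abs_nonneg _) _)
        · simp [hφ, Set.indicator_of_notMem h, hτsupp p h]
      · exact Filter.Eventually.of_forall fun p =>
          mul_nonneg (Real.rpow_nonneg (abs_nonneg _) _) (hτnonneg p)
    have hval : (∫ p : ℝ, φ p) = Cτ * ∫ p in (-1:ℝ)..1, |a - κ * p| ^ (-s) := by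
      rw [hφ, integral_indicator measurableSet_Icc, integral_Icc_eq_integral_Ioc,
        ← intervalIntegral.integral_of_le (by norm_num : (-1:ℝ) ≤ 1), intervalIntegral.integral_const_mul]
    have hchange : (∫ p in (-1:ℝ)..1, |a - κ * p| ^ (-s)) =
        κ⁻¹ * ∫ y in (a - κ)..(a + κ), |y| ^ (-s) := by
      have h := intervalIntegral.integral_comp_sub_mul (fun y : ℝ => |y| ^ (-s)) hκ.ne' a
        (a := (-1:ℝ)) (b := 1)
      rw [smul_eq_mul] at h
      rw [h, show a - κ * 1 = a - κ by ring, show a - κ * (-1) = a + κ by ring]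
    have hkey := my_key hs0 hs1 hκ a
    have hκs : κ⁻¹ * (2 * κ ^ (1 - s) / (1 - s)) = 2 * κ ^ (-s) / (1 - s) := by
      have h1 : κ ^ (1 - s) = κ * κ ^ (-s) := by
        rw [show (1:ℝ) - s = 1 + (-s) by ring, Real.rpow_add hκ, Real.rpow_one]
      rw [h1, ← mul_div_assoc,
        show κ⁻¹ * (2 * (κ * κ ^ (-s))) = 2 * κ ^ (-s) from by field_simp]
    calc (∫ p : ℝ, |a - κ * p| ^ (-s) * τ p) ≤ ∫ p : ℝ, φ p := hle
      _ = Cτ * (κ⁻¹ * ∫ y in (a - κ)..(a + κ), |y| ^ (-s)) := by rw [hval, hchange]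
      _ ≤ Cτ * (κ⁻¹ * (2 * κ ^ (1 - s) / (1 - s))) := by
          apply mul_le_mul_of_nonneg_left _ hCτ
          exact mul_le_mul_of_nonneg_left hkey (inv_nonneg.2 hκ.le)
      _ = B := by rw [hκs, hB]; ring
  -- outer bound
  have hνint : Integrable ν := by
    have hind : Integrable (Set.indicator (Set.Icc (-K) K) fun _ => Cν) := by
      rw [integrable_indicator_iff measurableSet_Icc]
      exact integrableOn_const measure_Icc_lt_top.ne
    apply hind.mono' hνmeas.aestronglyMeasurable
    filter_upwards [hνbd] with q hq
    rw [Real.norm_eq_abs, abs_of_nonneg (hνnonneg q)]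
    by_cases h : q ∈ Set.Icc (-K) K
    · simpa [Set.indicator_of_mem h] using hq
    · simp [Set.indicator_of_notMem h, hνsupp q h]
  have houter : ∀ r : ℝ, (∫ p : ℝ, |w - r - κ * p| ^ (-s) * ν r * τ p) ≤ ν r * B := by
    intro r
    have h1 : (fun p : ℝ => |w - r - κ * p| ^ (-s) * ν r * τ p) =
        fun p : ℝ => ν r * (|w - r - κ * p| ^ (-s) * τ p) := by funext p; ring
    rw [h1, integral_const_mul]
    exact mul_le_mul_of_nonneg_left (hinner (w - r)) (hνnonneg r)
  calc (∫ r : ℝ, ∫ p : ℝ, |w - r - κ * p| ^ (-s) * ν r * τ p) ≤ ∫ r : ℝ, ν r * B := by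
        apply integral_mono_of_nonneg ?_ (hνint.mul_const B) (Filter.Eventually.of_forall houter)
        exact Filter.Eventually.of_forall fun r => integral_nonneg fun p =>
          mul_nonneg (mul_nonneg (Real.rpow_nonneg (abs_nonneg _) _) (hνnonneg r)) (hτnonneg p)
    _ = B := by rw [integral_mul_const, hνprob, one_mul]
    _ ≤ 4 * K * Cν * Cτ * κ ^ (-s) / (1 - s) := by
        rw [hB, div_le_div_iff₀ hp0 hp0]
        have hκs : (0:ℝ) < κ ^ (-s) := Real.rpow_pos_of_pos hκ _
        nlinarith [mul_le_mul_of_nonneg_right hKC (mul_nonneg hCτ hκs.le), hκs, hCτ]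
end

section
/- Let ν : ℝ → [0, ∞) be a bounded measurable probability density vanishing outside [−K, K] for some K ∈ (0, ∞), and let σ be a Borel probability measure on ℝ² supported in [−1, 1]² whose two marginal measures σ₀ and σ₁ (the distributions of the first and second coordinates) have bounded densities. Then for every s ∈ (0, 1) there exists κ₁ < ∞, depending only on K, ‖ν‖_∞, the sup-norms of the marginal densities, and s, such that for all κ ≥ κ₁: sup over E ∈ ℝ and over w ∈ ℂ with Im w ≥ 0 of (T_{κ,E,s} 1)(w) < 1. -/
open MeasureTheory Complex

/-- The transfer operator `T_{κ,z,s}` acting on real-valued bounded Borel functions on the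
closed upper half-plane. -/
noncomputable def transferOpR (ν : ℝ → ℝ) (σ : Measure (ℝ × ℝ)) (κ : ℝ) (z : ℂ) (s : ℝ)
    (f : ℂ → ℝ) (w : ℂ) : ℝ :=
  ∫ p : ℝ × ℝ, (∫ r : ℝ, f (phiPlus z (r + κ * p.1, r + κ * p.2) w) *
    (((‖phiPlus z (r + κ * p.1, r + κ * p.2) w‖) ^ s
      + (‖phiMinus z (r + κ * p.1, r + κ * p.2) w‖) ^ s) * ν r)) ∂σ

section TransferAux

open Set
open scoped ENNReal NNReal

/-- `iota s y = |y|^{-s}` in `ℝ≥0∞` (with value `∞` at `y = 0`). -/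
noncomputable def TransferAux.iota (s : ℝ) (y : ℝ) : ℝ≥0∞ := ((ENNReal.ofReal |y|)⁻¹) ^ s

namespace TransferAux

lemma measurable_iota (s : ℝ) : Measurable (iota s) :=
  (((_root_.continuous_abs.measurable).ennreal_ofReal).inv).pow_const s

lemma iota_le_one {s y : ℝ} (hs : 0 ≤ s) (hy : 1 ≤ |y|) : iota s y ≤ 1 :=
  ENNReal.rpow_le_one (ENNReal.inv_le_one.2 (ENNReal.one_le_ofReal.2 hy)) hs

lemma iota_neg (s y : ℝ) : iota s (-y) = iota s y := by simp [iota, abs_neg]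

lemma ofReal_integral_le {α : Type*} [MeasurableSpace α] (μ : Measure α) (f : α → ℝ)
    (hf : 0 ≤ᵐ[μ] f) : ENNReal.ofReal (∫ x, f x ∂μ) ≤ ∫⁻ x, ENNReal.ofReal (f x) ∂μ := by
  by_cases h : Integrable f μ
  · exact (ofReal_integral_eq_lintegral_ofReal h hf).le
  · rw [integral_undef h]; simp

lemma ofReal_inv_le (a : ℝ) : ENNReal.ofReal a⁻¹ ≤ (ENNReal.ofReal a)⁻¹ := by
  rcases lt_or_ge 0 a with h | h
  · rw [← ENNReal.ofReal_inv_of_pos h]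
  · rw [ENNReal.ofReal_eq_zero.2 (inv_nonpos.2 h)]
    exact zero_le

noncomputable def J1 (s : ℝ) : ℝ≥0∞ := ∫⁻ y in Icc (-1:ℝ) 1, iota s y

lemma lintegral_comp_affine {g : ℝ → ℝ≥0∞} (hg : Measurable g) (t κ : ℝ) (hκ : κ ≠ 0) :
    ∫⁻ x : ℝ, g (t - κ * x) = ENNReal.ofReal |κ|⁻¹ * ∫⁻ y : ℝ, g y := by
  have hmeas : Measurable fun x : ℝ => t - κ * x :=
    (measurable_id.const_mul κ).const_sub t
  have h1 : Measure.map (fun x : ℝ => t - κ * x) volume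
      = ENNReal.ofReal |κ|⁻¹ • (volume : Measure ℝ) := by
    have hcomp : (fun x : ℝ => t - κ * x) = (fun y : ℝ => t + y) ∘ (fun x : ℝ => -κ * x) := by
      funext x; simp; ring
    rw [hcomp, ← Measure.map_map (measurable_const_add t) (measurable_const_mul (-κ)),
      Real.map_volume_mul_left (neg_ne_zero.2 hκ), Measure.map_smul,
      Measure.IsAddLeftInvariant.map_add_left_eq_self t]
    simp only [abs_inv, abs_neg]
  rw [← lintegral_map hg hmeas, h1, lintegral_smul_measure, smul_eq_mul]

lemma lintegral_Icc01_lt_top {s : ℝ} (hs0 : 0 < s) (hs1 : s < 1) :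
    (∫⁻ y in Icc (0:ℝ) 1, iota s y) < ⊤ := by
  have hint : IntegrableOn (fun y : ℝ => y ^ (-s)) (Ioc (0:ℝ) 1) := by
    have h := intervalIntegral.intervalIntegrable_rpow' (a := 0) (b := 1)
      (by linarith : (-1:ℝ) < -s)
    rwa [intervalIntegrable_iff, uIoc_of_le zero_le_one] at h
  have heq : ∫⁻ y in Icc (0:ℝ) 1, iota s y = ∫⁻ y in Ioc (0:ℝ) 1, iota s y :=
    (setLIntegral_congr Ioc_ae_eq_Icc).symm
  have heq2 : ∫⁻ y in Ioc (0:ℝ) 1, iota s y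
      = ∫⁻ y in Ioc (0:ℝ) 1, ENNReal.ofReal (y ^ (-s)) := by
    refine setLIntegral_congr_fun measurableSet_Ioc ?_
    intro y hy
    have hy0 : 0 < y := hy.1
    rw [iota, abs_of_pos hy0, ← ENNReal.ofReal_inv_of_pos hy0,
      ENNReal.ofReal_rpow_of_nonneg (inv_nonneg.2 hy0.le) hs0.le,
      Real.inv_rpow hy0.le, ← Real.rpow_neg hy0.le]
  rw [heq, heq2]
  exact hint.lintegral_lt_top

lemma J1_lt_top {s : ℝ} (hs0 : 0 < s) (hs1 : s < 1) : J1 s < ⊤ := by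
  have hneg : (∫⁻ y in Icc (-1:ℝ) 0, iota s y) = ∫⁻ y in Icc (0:ℝ) 1, iota s y := by
    rw [← lintegral_indicator measurableSet_Icc, ← lintegral_indicator measurableSet_Icc]
    have hmap : ∫⁻ y, (Icc (-1:ℝ) 0).indicator (iota s) y ∂volume
        = ∫⁻ y, (Icc (-1:ℝ) 0).indicator (iota s) (-y) ∂volume := by
      conv_lhs => rw [← Measure.map_neg_eq_self (volume : Measure ℝ)]
      exact lintegral_map ((measurable_iota s).indicator measurableSet_Icc) measurable_neg
    rw [hmap]
    refine lintegral_congr fun y => ?_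
    by_cases h : y ∈ Icc (0:ℝ) 1
    · rw [indicator_of_mem h,
        indicator_of_mem (by simp [mem_Icc] at h ⊢; constructor <;> linarith [h.1, h.2]), iota_neg]
    · rw [indicator_of_notMem h, indicator_of_notMem
        (by simp [mem_Icc] at h ⊢; intro h1; by_contra h2; push_neg at h2;
            exact absurd (h h2) (by linarith))]
  have hsub : Icc (-1:ℝ) 1 ⊆ Icc (-1:ℝ) 0 ∪ Icc (0:ℝ) 1 := by
    rw [Icc_union_Icc_eq_Icc (by norm_num : (-1:ℝ) ≤ 0) (by norm_num : (0:ℝ) ≤ 1)]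
  have hle : J1 s ≤ (∫⁻ y in Icc (-1:ℝ) 0, iota s y) + ∫⁻ y in Icc (0:ℝ) 1, iota s y := by
    refine le_trans ?_ (lintegral_union_le (μ := volume) (iota s) (Icc (-1:ℝ) 0) (Icc (0:ℝ) 1))
    exact lintegral_mono' (Measure.restrict_mono hsub le_rfl) le_rfl
  refine lt_of_le_of_lt hle ?_
  rw [hneg]
  exact ENNReal.add_lt_top.2 ⟨lintegral_Icc01_lt_top hs0 hs1, lintegral_Icc01_lt_top hs0 hs1⟩

lemma marginal_bound {s : ℝ} (hs0 : 0 < s) (hs1 : s < 1) (ρ : ℝ → ℝ)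
    (hmeas : Measurable ρ) (C : ℝ) (hbd : ∀ᵐ x, ρ x ≤ C)
    (hmass : ∫⁻ x, ENNReal.ofReal (ρ x) = 1)
    {κ : ℝ} (hκ : 1 ≤ κ) {h : ℝ} (hh : 1 ≤ h) (t : ℝ) :
    ∫⁻ x, iota s (t - κ * x) * ENNReal.ofReal (ρ x)
      ≤ ENNReal.ofReal C * (ENNReal.ofReal κ⁻¹ * (J1 s + ENNReal.ofReal (2 * h)))
        + ENNReal.ofReal (h⁻¹ ^ s) := by
  have hκ0 : (0:ℝ) < κ := lt_of_lt_of_le one_pos hκ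
  have hh0 : (0:ℝ) < h := lt_of_lt_of_le one_pos hh
  set S : Set ℝ := (fun x : ℝ => t - κ * x) ⁻¹' {y : ℝ | |y| ≤ h} with hSdef
  have haff : Measurable fun x : ℝ => t - κ * x :=
    (measurable_id.const_mul κ).const_sub t
  have hyset : MeasurableSet {y : ℝ | |y| ≤ h} :=
    (isClosed_le _root_.continuous_abs continuous_const).measurableSet
  have hSmeas : MeasurableSet S := haff hyset
  rw [← lintegral_add_compl (fun x => iota s (t - κ * x) * ENNReal.ofReal (ρ x)) hSmeas]
  refine add_le_add ?_ ?_
  · have h1 : ∫⁻ x in S, iota s (t - κ * x) * ENNReal.ofReal (ρ x)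
        ≤ ∫⁻ x in S, iota s (t - κ * x) * ENNReal.ofReal C := by
      refine setLIntegral_mono_ae' hSmeas ?_
      filter_upwards [hbd] with x hx _
      exact mul_le_mul_right (ENNReal.ofReal_le_ofReal hx) _
    refine h1.trans ?_
    rw [lintegral_mul_const' (ENNReal.ofReal C) _ ENNReal.ofReal_ne_top]
    rw [mul_comm]
    refine mul_le_mul_right ?_ _
    have hind : ∫⁻ x in S, iota s (t - κ * x)
        = ∫⁻ x : ℝ, ({y : ℝ | |y| ≤ h}.indicator (iota s)) (t - κ * x) := by
      rw [← lintegral_indicator hSmeas]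
      refine lintegral_congr fun x => ?_
      by_cases hx : x ∈ S
      · rw [indicator_of_mem hx]
        have hx' : (t - κ * x) ∈ {y : ℝ | |y| ≤ h} := hx
        exact (indicator_of_mem hx' (iota s)).symm
      · rw [indicator_of_notMem hx]
        have hx' : (t - κ * x) ∉ {y : ℝ | |y| ≤ h} := fun hmem => hx hmem
        exact (indicator_of_notMem hx' (iota s)).symm
    rw [hind, lintegral_comp_affine ((measurable_iota s).indicator hyset) t κ (ne_of_gt hκ0),
      abs_of_pos hκ0, lintegral_indicator hyset]
    refine mul_le_mul_right ?_ _
    have hset : {y : ℝ | |y| ≤ h} = Icc (-h) h := by ext y; simp [abs_le]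
    rw [hset]
    calc ∫⁻ y in Icc (-h) h, iota s y
        ≤ ∫⁻ y in Icc (-h) h, ((Icc (-1:ℝ) 1).indicator (iota s) y + 1) := by
          refine setLIntegral_mono' measurableSet_Icc fun y _ => ?_
          by_cases hy : y ∈ Icc (-1:ℝ) 1
          · rw [indicator_of_mem hy]; exact le_add_right le_rfl
          · rw [indicator_of_notMem hy]
            refine le_add_left (iota_le_one hs0.le ?_)
            simp only [mem_Icc, not_and_or, not_le] at hy
            rcases hy with hy | hy
            · rw [abs_of_neg (by linarith)]; linarith
            · rw [abs_of_pos (by linarith)]; linarith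
      _ = (∫⁻ y in Icc (-h) h, (Icc (-1:ℝ) 1).indicator (iota s) y) + volume (Icc (-h) h) := by
          have hadd := lintegral_add_right (μ := volume.restrict (Icc (-h) h))
            ((Icc (-1:ℝ) 1).indicator (iota s)) (g := fun _ => (1:ℝ≥0∞)) measurable_const
          rw [hadd, setLIntegral_one]
      _ ≤ J1 s + ENNReal.ofReal (2 * h) := by
          refine add_le_add ?_ ?_
          · refine le_trans (setLIntegral_le_lintegral _ _) ?_
            rw [lintegral_indicator measurableSet_Icc]
            exact le_of_eq rfl
          · rw [Real.volume_Icc]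
            exact ENNReal.ofReal_le_ofReal (by linarith)
  · have h2 : ∫⁻ x in Sᶜ, iota s (t - κ * x) * ENNReal.ofReal (ρ x)
        ≤ ∫⁻ x in Sᶜ, ENNReal.ofReal (h⁻¹ ^ s) * ENNReal.ofReal (ρ x) := by
      refine setLIntegral_mono' hSmeas.compl fun x hx => ?_
      refine mul_le_mul_left ?_ _
      have hxS : h < |t - κ * x| := by
        simpa [hSdef] using hx
      rw [iota, ← ENNReal.ofReal_rpow_of_nonneg (inv_nonneg.2 hh0.le) hs0.le,
        ENNReal.ofReal_inv_of_pos hh0]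
      exact ENNReal.rpow_le_rpow (ENNReal.inv_le_inv' (ENNReal.ofReal_le_ofReal hxS.le)) hs0.le
    refine h2.trans ?_
    rw [lintegral_const_mul' _ _ ENNReal.ofReal_ne_top]
    calc ENNReal.ofReal (h⁻¹ ^ s) * ∫⁻ x in Sᶜ, ENNReal.ofReal (ρ x)
        ≤ ENNReal.ofReal (h⁻¹ ^ s) * ∫⁻ x, ENNReal.ofReal (ρ x) :=
          mul_le_mul_right (setLIntegral_le_lintegral _ _) _
      _ = ENNReal.ofReal (h⁻¹ ^ s) := by rw [hmass, mul_one]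

lemma term_bound (x : ℝ) (w : ℂ) :
    ENNReal.ofReal ((‖w + ((x : ℝ) : ℂ) / (Real.sqrt 2 : ℂ)‖)⁻¹)
      ≤ 2 * (ENNReal.ofReal |Real.sqrt 2 * w.re + x|)⁻¹ := by
  have h2 : (0:ℝ) < Real.sqrt 2 := Real.sqrt_pos.2 two_pos
  have h2le : Real.sqrt 2 ≤ 2 := by
    nlinarith [Real.sq_sqrt (by norm_num : (2:ℝ) ≥ 0), Real.sqrt_nonneg 2]
  have hre : (w + (x : ℂ) / (Real.sqrt 2 : ℂ)).re = w.re + x / Real.sqrt 2 := by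
    have : ((x : ℂ) / (Real.sqrt 2 : ℂ)) = ((x / Real.sqrt 2 : ℝ) : ℂ) := by push_cast; ring
    rw [this, Complex.add_re, Complex.ofReal_re]
  have habs : |Real.sqrt 2 * w.re + x| / 2 ≤ ‖w + (x : ℂ) / (Real.sqrt 2 : ℂ)‖ := by
    have hsplit : w.re + x / Real.sqrt 2 = (Real.sqrt 2 * w.re + x) / Real.sqrt 2 := by
      field_simp
    calc |Real.sqrt 2 * w.re + x| / 2 ≤ |Real.sqrt 2 * w.re + x| / Real.sqrt 2 := by
          apply div_le_div_of_nonneg_left (abs_nonneg _) h2 h2le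
      _ = |w.re + x / Real.sqrt 2| := by
          rw [hsplit, abs_div, abs_of_pos h2]
      _ = |(w + (x : ℂ) / (Real.sqrt 2 : ℂ)).re| := by rw [hre]
      _ ≤ ‖w + (x : ℂ) / (Real.sqrt 2 : ℂ)‖ := Complex.abs_re_le_norm _
  calc ENNReal.ofReal ((‖w + (x : ℂ) / (Real.sqrt 2 : ℂ)‖)⁻¹)
      ≤ (ENNReal.ofReal (‖w + (x : ℂ) / (Real.sqrt 2 : ℂ)‖))⁻¹ := ofReal_inv_le _
    _ ≤ (ENNReal.ofReal (|Real.sqrt 2 * w.re + x| / 2))⁻¹ :=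
        ENNReal.inv_le_inv' (ENNReal.ofReal_le_ofReal habs)
    _ = 2 * (ENNReal.ofReal |Real.sqrt 2 * w.re + x|)⁻¹ := by
        rw [ENNReal.ofReal_div_of_pos two_pos, ENNReal.inv_div (Or.inl (by norm_num))
          (Or.inl (by norm_num)), div_eq_mul_inv]
        norm_num

lemma phi_bound {s : ℝ} (hs0 : 0 < s) (hs1 : s < 1) (E q₀ q₁ : ℝ) (w : ℂ) :
    ENNReal.ofReal (‖phiPlus (E : ℂ) (q₀, q₁) w‖ ^ s
        + ‖phiMinus (E : ℂ) (q₀, q₁) w‖ ^ s)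
      ≤ 4 * (iota s (Real.sqrt 2 * w.re + (E - q₀)) + iota s (Real.sqrt 2 * w.re + (E - q₁))) := by
  set d₀ : ℂ := w + ((E : ℂ) - (q₀ : ℂ)) / (Real.sqrt 2 : ℂ) with hd₀
  set d₁ : ℂ := w + ((E : ℂ) - (q₁ : ℂ)) / (Real.sqrt 2 : ℂ) with hd₁
  have hcast₀ : d₀ = w + (((E - q₀ : ℝ)) : ℂ) / (Real.sqrt 2 : ℂ) := by
    rw [hd₀]; push_cast; ring
  have hcast₁ : d₁ = w + (((E - q₁ : ℝ)) : ℂ) / (Real.sqrt 2 : ℂ) := by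
    rw [hd₁]; push_cast; ring
  set A : ℝ := (‖d₀‖)⁻¹ with hA
  set B : ℝ := (‖d₁‖)⁻¹ with hB
  have hAnn : 0 ≤ A := inv_nonneg.2 (norm_nonneg _)
  have hBnn : 0 ≤ B := inv_nonneg.2 (norm_nonneg _)
  have habsP : ‖phiPlus (E : ℂ) (q₀, q₁) w‖ ≤ A + B := by
    rw [phiPlus]
    calc ‖(1/2 : ℂ) * (-1 / d₀ + -1 / d₁)‖
        = (1/2) * ‖-1 / d₀ + -1 / d₁‖ := by
          rw [norm_mul]; norm_num
      _ ≤ (1/2) * (‖-1 / d₀‖ + ‖-1 / d₁‖) := by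
          have := norm_add_le (-1 / d₀) (-1 / d₁)
          linarith
      _ ≤ A + B := by
          rw [hA, hB]
          have e0 : ‖-1 / d₀‖ = (‖d₀‖)⁻¹ := by
            rw [norm_div, norm_neg, norm_one, one_div]
          have e1 : ‖-1 / d₁‖ = (‖d₁‖)⁻¹ := by
            rw [norm_div, norm_neg, norm_one, one_div]
          rw [e0, e1]
          linarith
  have habsM : ‖phiMinus (E : ℂ) (q₀, q₁) w‖ ≤ A + B := by
    rw [phiMinus]
    calc ‖(1/2 : ℂ) * (-1 / d₀ - -1 / d₁)‖
        = (1/2) * ‖-1 / d₀ - -1 / d₁‖ := by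
          rw [norm_mul]; norm_num
      _ ≤ (1/2) * (‖-1 / d₀‖ + ‖-1 / d₁‖) := by
          have h1 : ‖-1 / d₀ - -1 / d₁‖
              ≤ ‖-1 / d₀‖ + ‖-1 / d₁‖ := by
            have h2 := norm_add_le (-1 / d₀) (-(-1 / d₁))
            rw [norm_neg] at h2
            simpa [sub_eq_add_neg] using h2
          linarith
      _ ≤ A + B := by
          rw [hA, hB]
          have e0 : ‖-1 / d₀‖ = (‖d₀‖)⁻¹ := by
            rw [norm_div, norm_neg, norm_one, one_div]
          have e1 : ‖-1 / d₁‖ = (‖d₁‖)⁻¹ := by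
            rw [norm_div, norm_neg, norm_one, one_div]
          rw [e0, e1]
          linarith
  have key : ∀ (d : ℂ) (q : ℝ), d = w + (((E - q : ℝ)) : ℂ) / (Real.sqrt 2 : ℂ) →
      (ENNReal.ofReal ((‖d‖)⁻¹)) ^ s ≤ 2 * iota s (Real.sqrt 2 * w.re + (E - q)) := by
    intro d q hd
    have h1 : ENNReal.ofReal ((‖d‖)⁻¹)
        ≤ 2 * (ENNReal.ofReal |Real.sqrt 2 * w.re + (E - q)|)⁻¹ := by
      rw [hd]; exact term_bound (E - q) w
    calc (ENNReal.ofReal ((‖d‖)⁻¹)) ^ s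
        ≤ (2 * (ENNReal.ofReal |Real.sqrt 2 * w.re + (E - q)|)⁻¹) ^ s :=
          ENNReal.rpow_le_rpow h1 hs0.le
      _ = (2:ℝ≥0∞) ^ s * iota s (Real.sqrt 2 * w.re + (E - q)) := by
          rw [ENNReal.mul_rpow_of_nonneg _ _ hs0.le]; rfl
      _ ≤ 2 * iota s (Real.sqrt 2 * w.re + (E - q)) := by
          refine mul_le_mul_left ?_ _
          calc (2:ℝ≥0∞) ^ s ≤ (2:ℝ≥0∞) ^ (1:ℝ) :=
                ENNReal.rpow_le_rpow_of_exponent_le one_le_two hs1.le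
            _ = 2 := ENNReal.rpow_one 2
  have hsum : ∀ φ : ℂ, ‖φ‖ ≤ A + B →
      ENNReal.ofReal (‖φ‖ ^ s)
        ≤ (ENNReal.ofReal A) ^ s + (ENNReal.ofReal B) ^ s := by
    intro φ hφ
    rw [← ENNReal.ofReal_rpow_of_nonneg (norm_nonneg _) hs0.le]
    calc (ENNReal.ofReal (‖φ‖)) ^ s
        ≤ (ENNReal.ofReal (A + B)) ^ s :=
          ENNReal.rpow_le_rpow (ENNReal.ofReal_le_ofReal hφ) hs0.le
      _ = (ENNReal.ofReal A + ENNReal.ofReal B) ^ s := by rw [ENNReal.ofReal_add hAnn hBnn]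
      _ ≤ _ := ENNReal.rpow_add_le_add_rpow _ _ hs0.le hs1.le
  have hA2 : (ENNReal.ofReal A) ^ s ≤ 2 * iota s (Real.sqrt 2 * w.re + (E - q₀)) := by
    rw [hA]; exact key d₀ q₀ hcast₀
  have hB2 : (ENNReal.ofReal B) ^ s ≤ 2 * iota s (Real.sqrt 2 * w.re + (E - q₁)) := by
    rw [hB]; exact key d₁ q₁ hcast₁
  rw [ENNReal.ofReal_add (Real.rpow_nonneg (norm_nonneg _) s)
    (Real.rpow_nonneg (norm_nonneg _) s)]
  calc ENNReal.ofReal (‖phiPlus (E : ℂ) (q₀, q₁) w‖ ^ s)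
        + ENNReal.ofReal (‖phiMinus (E : ℂ) (q₀, q₁) w‖ ^ s)
      ≤ ((ENNReal.ofReal A) ^ s + (ENNReal.ofReal B) ^ s)
        + ((ENNReal.ofReal A) ^ s + (ENNReal.ofReal B) ^ s) :=
        add_le_add (hsum _ habsP) (hsum _ habsM)
    _ ≤ (2 * iota s (Real.sqrt 2 * w.re + (E - q₀)) + 2 * iota s (Real.sqrt 2 * w.re + (E - q₁)))
        + (2 * iota s (Real.sqrt 2 * w.re + (E - q₀))
            + 2 * iota s (Real.sqrt 2 * w.re + (E - q₁))) :=
        add_le_add (add_le_add hA2 hB2) (add_le_add hA2 hB2)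
    _ = 4 * (iota s (Real.sqrt 2 * w.re + (E - q₀)) + iota s (Real.sqrt 2 * w.re + (E - q₁))) := by
        ring

end TransferAux

end TransferAux

open TransferAux Set
open scoped ENNReal

/-- Lemma 6.1 / Theorem 1.6 ingredient (large coupling): if both marginals of `σ` have
bounded densities, then for every `s ∈ (0,1)` there is `κ₁ < ∞` such that for all
`κ ≥ κ₁`, `sup_{E ∈ ℝ, Im w ≥ 0} (T_{κ,E,s} 1)(w) < 1`. -/
theorem transferOp_large_coupling (K : ℝ) (hK : 0 < K) (ν : ℝ → ℝ)
    (hνmeas : Measurable ν) (hνnonneg : ∀ q, 0 ≤ ν q)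
    (hνsupp : ∀ q, q ∉ Set.Icc (-K) K → ν q = 0)
    (hνprob : ∫ q : ℝ, ν q = 1)
    (Cν : ℝ) (hνbd : ∀ᵐ q : ℝ, ν q ≤ Cν)
    (σ : Measure (ℝ × ℝ)) [IsProbabilityMeasure σ]
    (hσsupp : σ {p : ℝ × ℝ | ¬(|p.1| ≤ 1 ∧ |p.2| ≤ 1)} = 0)
    (σ₀ σ₁ : ℝ → ℝ) (hσ₀meas : Measurable σ₀) (hσ₁meas : Measurable σ₁)
    (hσ₀nonneg : ∀ p, 0 ≤ σ₀ p) (hσ₁nonneg : ∀ p, 0 ≤ σ₁ p)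
    (hmarg₀ : σ.map Prod.fst = volume.withDensity (fun x => ENNReal.ofReal (σ₀ x)))
    (hmarg₁ : σ.map Prod.snd = volume.withDensity (fun x => ENNReal.ofReal (σ₁ x)))
    (C₀ C₁ : ℝ) (hσ₀bd : ∀ᵐ p : ℝ, σ₀ p ≤ C₀) (hσ₁bd : ∀ᵐ p : ℝ, σ₁ p ≤ C₁)
    (s : ℝ) (hs0 : 0 < s) (hs1 : s < 1) :
    ∃ κ₁ : ℝ, ∀ κ : ℝ, κ₁ ≤ κ → ∃ δ : ℝ, δ < 1 ∧ ∀ E : ℝ, ∀ w : ℂ, 0 ≤ w.im →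
      transferOpR ν σ κ (E : ℂ) s (fun _ => 1) w ≤ δ := by
  classical
  set Cm : ℝ := max (max C₀ C₁) 0 with hCmdef
  have hCm0 : 0 ≤ Cm := le_max_right _ _
  set h : ℝ := (32:ℝ) ^ (s⁻¹) with hhdef
  have hh1 : (1:ℝ) ≤ h := Real.one_le_rpow (by norm_num) (by positivity)
  have hpow : h ^ s = 32 := by
    rw [hhdef, ← Real.rpow_mul (by norm_num : (0:ℝ) ≤ 32),
      inv_mul_cancel₀ (ne_of_gt hs0), Real.rpow_one]
  have hhs : h⁻¹ ^ s = (32:ℝ)⁻¹ := by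
    rw [Real.inv_rpow (by positivity : (0:ℝ) ≤ h), hpow]
  set c1 : ℝ := (J1 s).toReal with hc1def
  have hc1nn : 0 ≤ c1 := ENNReal.toReal_nonneg
  have hJ1le : J1 s ≤ ENNReal.ofReal c1 :=
    le_of_eq (ENNReal.ofReal_toReal (J1_lt_top hs0 hs1).ne).symm
  -- ν : integrability and mass
  have hνint : Integrable ν := by
    have hg : Integrable ((Set.Icc (-K) K).indicator (fun _ => max Cν 0)) volume := by
      rw [integrable_indicator_iff measurableSet_Icc]
      exact integrableOn_const (by rw [Real.volume_Icc]; exact ENNReal.ofReal_ne_top)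
    refine hg.mono' hνmeas.aestronglyMeasurable ?_
    filter_upwards [hνbd] with x hx
    rw [Real.norm_eq_abs, _root_.abs_of_nonneg (hνnonneg x)]
    by_cases hmem : x ∈ Set.Icc (-K) K
    · rw [indicator_of_mem hmem]; exact hx.trans (le_max_left _ _)
    · rw [indicator_of_notMem hmem, hνsupp x hmem]
  have hνmass : ∫⁻ r, ENNReal.ofReal (ν r) = 1 := by
    rw [← ofReal_integral_eq_lintegral_ofReal hνint (Filter.Eventually.of_forall hνnonneg),
      hνprob, ENNReal.ofReal_one]
  -- marginal masses
  have hmass0 : ∫⁻ x, ENNReal.ofReal (σ₀ x) = 1 := by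
    have hp : (σ.map Prod.fst) Set.univ = 1 := by
      rw [Measure.map_apply measurable_fst MeasurableSet.univ]
      simp
    rw [hmarg₀, withDensity_apply _ MeasurableSet.univ, Measure.restrict_univ] at hp
    exact hp
  have hmass1 : ∫⁻ x, ENNReal.ofReal (σ₁ x) = 1 := by
    have hp : (σ.map Prod.snd) Set.univ = 1 := by
      rw [Measure.map_apply measurable_snd MeasurableSet.univ]
      simp
    rw [hmarg₁, withDensity_apply _ MeasurableSet.univ, Measure.restrict_univ] at hp
    exact hp
  have hbd0 : ∀ᵐ x : ℝ, σ₀ x ≤ Cm :=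
    hσ₀bd.mono fun x hx => hx.trans (le_trans (le_max_left C₀ C₁) (le_max_left _ _))
  have hbd1 : ∀ᵐ x : ℝ, σ₁ x ≤ Cm :=
    hσ₁bd.mono fun x hx => hx.trans (le_trans (le_max_right C₀ C₁) (le_max_left _ _))
  refine ⟨max 1 (32 * (Cm + 1) * (c1 + 2 * h)), fun κ hκle =>
    ⟨1/2, by norm_num, fun E w him => ?_⟩⟩
  have hκ1 : (1:ℝ) ≤ κ := le_trans (le_max_left _ _) hκle
  have hκ0 : (0:ℝ) < κ := by linarith
  -- numeric bound
  have hreal : Cm * (κ⁻¹ * (c1 + 2 * h)) ≤ (32:ℝ)⁻¹ := by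
    have hc2 : (0:ℝ) < c1 + 2 * h := by linarith
    have hX : (0:ℝ) < 32 * (Cm + 1) * (c1 + 2 * h) := by positivity
    have h1 : κ⁻¹ ≤ (32 * (Cm + 1) * (c1 + 2 * h))⁻¹ :=
      inv_anti₀ hX (le_trans (le_max_right _ _) hκle)
    calc Cm * (κ⁻¹ * (c1 + 2 * h))
        ≤ Cm * ((32 * (Cm + 1) * (c1 + 2 * h))⁻¹ * (c1 + 2 * h)) :=
          mul_le_mul_of_nonneg_left (mul_le_mul_of_nonneg_right h1 hc2.le) hCm0
      _ = Cm / (32 * (Cm + 1)) := by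
          field_simp
      _ ≤ (32:ℝ)⁻¹ := by
          rw [div_le_iff₀ (by positivity)]
          nlinarith
  set Bb : ℝ≥0∞ := ENNReal.ofReal Cm * (ENNReal.ofReal κ⁻¹ * (J1 s + ENNReal.ofReal (2 * h)))
      + ENNReal.ofReal (h⁻¹ ^ s) with hBbdef
  have hBble : Bb ≤ ENNReal.ofReal (1/16) := by
    have t1 : ENNReal.ofReal Cm * (ENNReal.ofReal κ⁻¹ * (J1 s + ENNReal.ofReal (2 * h)))
        ≤ ENNReal.ofReal (32⁻¹) := by
      calc ENNReal.ofReal Cm * (ENNReal.ofReal κ⁻¹ * (J1 s + ENNReal.ofReal (2 * h)))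
          ≤ ENNReal.ofReal Cm * (ENNReal.ofReal κ⁻¹
              * (ENNReal.ofReal c1 + ENNReal.ofReal (2 * h))) :=
            mul_le_mul_right (mul_le_mul_right (add_le_add_left hJ1le _) _) _
        _ = ENNReal.ofReal (Cm * (κ⁻¹ * (c1 + 2 * h))) := by
            rw [← ENNReal.ofReal_add hc1nn (by linarith), ← ENNReal.ofReal_mul (by positivity),
              ← ENNReal.ofReal_mul hCm0]
        _ ≤ ENNReal.ofReal (32⁻¹) := ENNReal.ofReal_le_ofReal hreal
    calc Bb ≤ ENNReal.ofReal 32⁻¹ + ENNReal.ofReal 32⁻¹ := by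
          rw [hBbdef, hhs]; exact add_le_add t1 le_rfl
      _ = ENNReal.ofReal (32⁻¹ + 32⁻¹) := (ENNReal.ofReal_add (by norm_num) (by norm_num)).symm
      _ ≤ ENNReal.ofReal (1/16) := ENNReal.ofReal_le_ofReal (by norm_num)
  set τ : ℝ := Real.sqrt 2 * w.re + E with hτdef
  -- marginal estimates
  have hI0 : ∀ r : ℝ, (∫⁻ p : ℝ × ℝ, iota s (τ - r - κ * p.1) ∂σ) ≤ Bb := by
    intro r
    have hιm : Measurable fun x : ℝ => iota s (τ - r - κ * x) :=
      (measurable_iota s).comp ((measurable_id.const_mul κ).const_sub (τ - r))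
    have hmap : ∫⁻ p : ℝ × ℝ, iota s (τ - r - κ * p.1) ∂σ
        = ∫⁻ x : ℝ, iota s (τ - r - κ * x) ∂(σ.map Prod.fst) :=
      (lintegral_map hιm measurable_fst).symm
    rw [hmap, hmarg₀, lintegral_withDensity_eq_lintegral_mul volume hσ₀meas.ennreal_ofReal hιm]
    have hcomm : ∫⁻ x, ((fun x => ENNReal.ofReal (σ₀ x)) * fun x => iota s (τ - r - κ * x)) x
        = ∫⁻ x, iota s (τ - r - κ * x) * ENNReal.ofReal (σ₀ x) :=
      lintegral_congr fun x => by simp [mul_comm]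
    rw [hcomm, hBbdef]
    exact marginal_bound hs0 hs1 σ₀ hσ₀meas Cm hbd0 hmass0 hκ1 hh1 (τ - r)
  have hI1 : ∀ r : ℝ, (∫⁻ p : ℝ × ℝ, iota s (τ - r - κ * p.2) ∂σ) ≤ Bb := by
    intro r
    have hιm : Measurable fun x : ℝ => iota s (τ - r - κ * x) :=
      (measurable_iota s).comp ((measurable_id.const_mul κ).const_sub (τ - r))
    have hmap : ∫⁻ p : ℝ × ℝ, iota s (τ - r - κ * p.2) ∂σ
        = ∫⁻ x : ℝ, iota s (τ - r - κ * x) ∂(σ.map Prod.snd) :=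
      (lintegral_map hιm measurable_snd).symm
    rw [hmap, hmarg₁, lintegral_withDensity_eq_lintegral_mul volume hσ₁meas.ennreal_ofReal hιm]
    have hcomm : ∫⁻ x, ((fun x => ENNReal.ofReal (σ₁ x)) * fun x => iota s (τ - r - κ * x)) x
        = ∫⁻ x, iota s (τ - r - κ * x) * ENNReal.ofReal (σ₁ x) :=
      lintegral_congr fun x => by simp [mul_comm]
    rw [hcomm, hBbdef]
    exact marginal_bound hs0 hs1 σ₁ hσ₁meas Cm hbd1 hmass1 hκ1 hh1 (τ - r)
  -- the integrand and its ENNReal majorant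
  set F : ℝ × ℝ → ℝ → ℝ := fun p r =>
    (‖phiPlus (E : ℂ) (r + κ * p.1, r + κ * p.2) w‖ ^ s
      + ‖phiMinus (E : ℂ) (r + κ * p.1, r + κ * p.2) w‖ ^ s) * ν r with hFdef
  have hFnn : ∀ p r, 0 ≤ F p r := fun p r =>
    mul_nonneg (add_nonneg (Real.rpow_nonneg (norm_nonneg _) s)
      (Real.rpow_nonneg (norm_nonneg _) s)) (hνnonneg r)
  set G : ℝ × ℝ → ℝ → ℝ≥0∞ := fun p r =>
    4 * (iota s (τ - r - κ * p.1) + iota s (τ - r - κ * p.2)) * ENNReal.ofReal (ν r) with hGdef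
  have hFG : ∀ p r, ENNReal.ofReal (F p r) ≤ G p r := by
    intro p r
    rw [hFdef, hGdef]
    simp only
    rw [ENNReal.ofReal_mul (add_nonneg (Real.rpow_nonneg (norm_nonneg _) s)
      (Real.rpow_nonneg (norm_nonneg _) s))]
    refine mul_le_mul_left ?_ _
    have hb := phi_bound hs0 hs1 E (r + κ * p.1) (r + κ * p.2) w
    have e0 : Real.sqrt 2 * w.re + (E - (r + κ * p.1)) = τ - r - κ * p.1 := by
      rw [hτdef]; ring
    have e1 : Real.sqrt 2 * w.re + (E - (r + κ * p.2)) = τ - r - κ * p.2 := by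
      rw [hτdef]; ring
    rw [e0, e1] at hb
    exact hb
  -- chain of estimates
  have step1 : ENNReal.ofReal (transferOpR ν σ κ (E : ℂ) s (fun _ => 1) w)
      ≤ ∫⁻ p : ℝ × ℝ, ∫⁻ r : ℝ, ENNReal.ofReal (F p r) ∂volume ∂σ := by
    have hT : transferOpR ν σ κ (E : ℂ) s (fun _ => 1) w = ∫ p : ℝ × ℝ, (∫ r : ℝ, F p r) ∂σ := by
      simp only [transferOpR, hFdef, one_mul]
    rw [hT]
    refine le_trans (ofReal_integral_le σ _
      (Filter.Eventually.of_forall fun p => integral_nonneg (hFnn p))) ?_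
    exact lintegral_mono fun p => ofReal_integral_le volume _
      (Filter.Eventually.of_forall (hFnn p))
  have step2 : (∫⁻ p : ℝ × ℝ, ∫⁻ r : ℝ, ENNReal.ofReal (F p r) ∂volume ∂σ)
      ≤ ∫⁻ p : ℝ × ℝ, ∫⁻ r : ℝ, G p r ∂volume ∂σ :=
    lintegral_mono fun p => lintegral_mono fun r => hFG p r
  have hGmeas : Measurable (Function.uncurry G) := by
    rw [hGdef]
    have m1 : Measurable fun z : (ℝ × ℝ) × ℝ => iota s (τ - z.2 - κ * z.1.1) :=
      (measurable_iota s).comp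
        ((measurable_snd.const_sub τ).sub (measurable_fst.fst.const_mul κ))
    have m2 : Measurable fun z : (ℝ × ℝ) × ℝ => iota s (τ - z.2 - κ * z.1.2) :=
      (measurable_iota s).comp
        ((measurable_snd.const_sub τ).sub (measurable_fst.snd.const_mul κ))
    exact ((measurable_const.mul (m1.add m2)).mul
      ((hνmeas.comp measurable_snd).ennreal_ofReal))
  have step3 : (∫⁻ p : ℝ × ℝ, ∫⁻ r : ℝ, G p r ∂volume ∂σ)
      = ∫⁻ r : ℝ, ∫⁻ p : ℝ × ℝ, G p r ∂σ ∂volume :=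
    lintegral_lintegral_swap hGmeas.aemeasurable
  have step4 : (∫⁻ r : ℝ, ∫⁻ p : ℝ × ℝ, G p r ∂σ ∂volume)
      ≤ ∫⁻ r : ℝ, (8 * Bb) * ENNReal.ofReal (ν r) ∂volume := by
    refine lintegral_mono fun r => ?_
    have hιm0 : Measurable fun p : ℝ × ℝ => iota s (τ - r - κ * p.1) :=
      (measurable_iota s).comp ((measurable_fst.const_mul κ).const_sub (τ - r))
    calc (∫⁻ p : ℝ × ℝ, G p r ∂σ)
        = 4 * ((∫⁻ p : ℝ × ℝ, iota s (τ - r - κ * p.1) ∂σ)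
            + ∫⁻ p : ℝ × ℝ, iota s (τ - r - κ * p.2) ∂σ) * ENNReal.ofReal (ν r) := by
          simp only [hGdef]
          rw [lintegral_mul_const' _ _ ENNReal.ofReal_ne_top,
            lintegral_const_mul' _ _ (by norm_num : (4:ℝ≥0∞) ≠ ⊤),
            lintegral_add_left hιm0]
      _ ≤ 4 * (Bb + Bb) * ENNReal.ofReal (ν r) :=
          mul_le_mul_left (mul_le_mul_right (add_le_add (hI0 r) (hI1 r)) _) _
      _ = (8 * Bb) * ENNReal.ofReal (ν r) := by
          congr 1
          ring
  have step5 : (∫⁻ r : ℝ, (8 * Bb) * ENNReal.ofReal (ν r) ∂volume) = 8 * Bb := by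
    rw [lintegral_const_mul'' _ (hνmeas.ennreal_ofReal.aemeasurable), hνmass, mul_one]
  have step6 : (8:ℝ≥0∞) * Bb ≤ ENNReal.ofReal (1/2) := by
    calc (8:ℝ≥0∞) * Bb ≤ 8 * ENNReal.ofReal (1/16) := mul_le_mul_right hBble _
      _ = ENNReal.ofReal 8 * ENNReal.ofReal (1/16) := by
          norm_num
      _ = ENNReal.ofReal (8 * (1/16)) := (ENNReal.ofReal_mul (by norm_num)).symm
      _ ≤ ENNReal.ofReal (1/2) := ENNReal.ofReal_le_ofReal (by norm_num)
  have final : ENNReal.ofReal (transferOpR ν σ κ (E : ℂ) s (fun _ => 1) w)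
      ≤ ENNReal.ofReal (1/2) :=
    ((((step1.trans step2).trans step3.le).trans step4).trans step5.le).trans step6
  exact (ENNReal.ofReal_le_ofReal_iff (by norm_num)).1 final
end
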